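/- The Cantor fan F_C is 1/3-homogeneous. -/

import Mathlib

set_option maxHeartbeats 1000000


open Set Filter Topology Metric

namespace FansHomogeneity

/-- `A` is an arc in `X` with endpoints `p` and `q`. -/
def IsArcWith {X : Type*} [TopologicalSpace X] (A : Set X) (p q : X) : Prop :=
  ∃ h : unitInterval ≃ₜ A, (h 0 : X) = p ∧ (h 1 : X) = q

/-- `A` is the (possibly degenerate) arc with endpoints `p` and `q`:
either `p = q` and `A = {p}`, or `A` is an arc from `p` to `q`. -/
def IsArcOrPt {X : Type*} [TopologicalSpace X] (A : Set X) (p q : X) : Prop :=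
  (p = q ∧ A = {p}) ∨ IsArcWith A p q

/-- A subcontinuum of a space: a nonempty compact connected subset. -/
def IsSubcontinuum {X : Type*} [TopologicalSpace X] (A : Set X) : Prop :=
  IsCompact A ∧ IsConnected A

/-- A space is hereditarily unicoherent if the intersection of any two subcontinua
is connected. -/
def HereditarilyUnicoherent (X : Type*) [TopologicalSpace X] : Prop :=
  ∀ A B : Set X, IsSubcontinuum A → IsSubcontinuum B → IsPreconnected (A ∩ B)

/-- A space is arcwise connected if any two distinct points are the endpoints of an arc. -/
def ArcwiseConnected (X : Type*) [TopologicalSpace X] : Prop :=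
  ∀ p q : X, p ≠ q → ∃ A : Set X, IsArcWith A p q

/-- A dendroid: an arcwise connected, hereditarily unicoherent continuum
(nonempty compact connected metric space). -/
def IsDendroid (X : Type*) [MetricSpace X] : Prop :=
  CompactSpace X ∧ ConnectedSpace X ∧ ArcwiseConnected X ∧ HereditarilyUnicoherent X

/-- `p` has order at least `n`: `p` is a common endpoint of `n` arcs in `X` which
pairwise intersect only in `p`. -/
def OrderGe (X : Type*) [TopologicalSpace X] (p : X) (n : ℕ) : Prop :=
  ∃ F : Fin n → Set X, (∀ i, ∃ q : X, IsArcWith (F i) p q) ∧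
    ∀ i j, i ≠ j → F i ∩ F j = {p}

/-- The endpoints of `X`: points of order exactly `1`. -/
def endpoints (X : Type*) [TopologicalSpace X] : Set X :=
  {p | OrderGe X p 1 ∧ ¬ OrderGe X p 2}

/-- The ordinary points of `X`: points of order exactly `2`. -/
def ordinaryPoints (X : Type*) [TopologicalSpace X] : Set X :=
  {p | OrderGe X p 2 ∧ ¬ OrderGe X p 3}

/-- The ramification points of `X`: points of order greater than `2`. -/
def ramificationPoints (X : Type*) [TopologicalSpace X] : Set X :=
  {p | OrderGe X p 3}

/-- A fan with top `t`: a dendroid whose unique ramification point is `t`. -/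
def IsFanWithTop (X : Type*) [MetricSpace X] (t : X) : Prop :=
  IsDendroid X ∧ ramificationPoints X = {t}

/-- A fan: a dendroid with exactly one ramification point. -/
def IsFan (X : Type*) [MetricSpace X] : Prop :=
  ∃ t : X, IsFanWithTop X t

/-- The orbit of a point under the action of the homeomorphism group of `X`. -/
def orbit (X : Type*) [TopologicalSpace X] (x : X) : Set X :=
  {y | ∃ h : X ≃ₜ X, h x = y}

/-- `A` is an orbit of the action of the homeomorphism group of `X` on `X`. -/
def IsOrbit (X : Type*) [TopologicalSpace X] (A : Set X) : Prop :=
  ∃ x : X, A = orbit X x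

/-- The set of orbits of the action of the homeomorphism group of `X` on `X`. -/
def orbits (X : Type*) [TopologicalSpace X] : Set (Set X) :=
  {A | IsOrbit X A}

/-- `X` is `1/n`-homogeneous (has homogeneity degree `n`): the action of the
homeomorphism group of `X` on `X` has exactly `n` orbits. -/
def OneOverHomogeneous (X : Type*) [TopologicalSpace X] (n : ℕ) : Prop :=
  (orbits X).ncard = n

/-- A fan `X` with top `t` is smooth at `t` with respect to `a` if for every sequence
converging to `a` the arcs from `t` converge, in the Hausdorff metric, to the arc `t a`. -/
def SmoothAt (X : Type*) [MetricSpace X] (t a : X) : Prop :=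
  ∀ (α : ℕ → X) (A : ℕ → Set X) (B : Set X),
    Tendsto α atTop (nhds a) → (∀ n, IsArcOrPt (A n) t (α n)) → IsArcOrPt B t a →
    Tendsto (fun n => hausdorffDist (A n) B) atTop (nhds 0)

/-- `S(X)`: the set of points `a` such that `X` is smooth at the top `t` with respect to `a`. -/
def smoothSet (X : Type*) [MetricSpace X] (t : X) : Set X :=
  {a | SmoothAt X t a}

/-- A smooth fan with top `t`. -/
def IsSmoothFanWithTop (X : Type*) [MetricSpace X] (t : X) : Prop :=
  IsFanWithTop X t ∧ smoothSet X t = univ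

/-- A smooth fan. -/
def IsSmoothFan (X : Type*) [MetricSpace X] : Prop :=
  ∃ t : X, IsSmoothFanWithTop X t

/-- The relation on `cantorSet × [0,1]` generating the identification of
`cantorSet × {1}` to a point. -/
def cantorFanRel (a b : ↥cantorSet × unitInterval) : Prop :=
  a.2 = 1 ∧ b.2 = 1

/-- The Cantor fan: the quotient `(C × [0,1]) / (C × {1})` where `C` is the
middle-thirds Cantor set. -/
def CantorFan : Type := Quot cantorFanRel

instance : TopologicalSpace CantorFan :=
  instTopologicalSpaceQuot

/-- The fan `F_ω ⊆ ℝ²`: the union of the segments from `(0,0)` to `(1/i, 1/i²)`, `i ≥ 1`. -/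
def Fomega : Set (ℝ × ℝ) :=
  ⋃ i : ℕ, segment ℝ ((0, 0) : ℝ × ℝ) ((1 / ((i : ℝ) + 1), 1 / ((i : ℝ) + 1) ^ 2) : ℝ × ℝ)

/-- The shrinking Cantor fan `F_{C_ω} ⊆ ℝ²`: for each `i ≥ 1` the union of the segments
from the origin to `(c, 1/2^(i-1))` for `c ∈ C ∩ [(3^(i-1)-1)/3^(i-1), (3^i-2)/3^i]`
(here indexed by `i - 1 ∈ ℕ`). -/
def shrinkingCantorFan : Set (ℝ × ℝ) :=
  ⋃ i : ℕ, ⋃ c ∈ cantorSet ∩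
      Icc (((3 : ℝ) ^ i - 1) / 3 ^ i) (((3 : ℝ) ^ (i + 1) - 2) / 3 ^ (i + 1)),
    segment ℝ ((0, 0) : ℝ × ℝ) ((c, (1 / 2 : ℝ) ^ i) : ℝ × ℝ)

/-- `S` is a simple `n`-od in the plane: the union of `n` straight line segments
which pairwise intersect exactly in a common endpoint. -/
def IsSimpleNod (n : ℕ) (S : Set (ℝ × ℝ)) : Prop :=
  ∃ (o : ℝ × ℝ) (b : Fin n → ℝ × ℝ),
    (∀ i, b i ≠ o) ∧
    S = ⋃ i, segment ℝ o (b i) ∧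
    ∀ i j, i ≠ j → segment ℝ o (b i) ∩ segment ℝ o (b j) = {o}

/-- `X` is colocally connected at `p`: every neighborhood of `p` contains a
neighborhood `V` of `p` such that `X - V` is connected. -/
def ColocallyConnectedAt (X : Type*) [TopologicalSpace X] (p : X) : Prop :=
  ∀ U ∈ nhds p, ∃ V ∈ nhds p, V ⊆ U ∧ IsPreconnected Vᶜ

/-- `X` is homeomorphic to the Lelek fan, i.e. to a smooth fan whose set of
endpoints is dense in it. -/
def HomeoToLelekFan (X : Type*) [TopologicalSpace X] : Prop :=
  ∃ (Y : Type) (m : MetricSpace Y),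
    @IsSmoothFan Y m ∧
    @Dense Y (@UniformSpace.toTopologicalSpace Y
        (@PseudoMetricSpace.toUniformSpace Y m.toPseudoMetricSpace))
      (@endpoints Y (@UniformSpace.toTopologicalSpace Y
        (@PseudoMetricSpace.toUniformSpace Y m.toPseudoMetricSpace))) ∧
    Nonempty (@Homeomorph X Y _ (@UniformSpace.toTopologicalSpace Y
        (@PseudoMetricSpace.toUniformSpace Y m.toPseudoMetricSpace)))

/-! ### Auxiliary development -/


lemma preCantorSet_subset_unitInterval {n : ℕ} : preCantorSet n ⊆ Icc 0 1 := by
  induction n with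
  | zero => exact subset_rfl
  | succ n ih =>
    rintro x (⟨y, hy, rfl⟩ | ⟨y, hy, rfl⟩)
    · have := ih hy
      constructor <;> [linarith [this.1]; linarith [this.2]]
    · have := ih hy
      constructor <;> [linarith [this.1]; linarith [this.2]]

lemma one_mem_cantorSet : (1 : ℝ) ∈ cantorSet := by
  refine Set.mem_iInter.mpr fun n => ?_
  induction n with
  | zero => exact ⟨zero_le_one, le_refl 1⟩
  | succ n ih => exact Or.inr ⟨1, ih, by norm_num⟩

lemma div_three_mem_cantorSet {x : ℝ} (hx : x ∈ cantorSet) : x / 3 ∈ cantorSet := by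
  refine Set.mem_iInter.mpr fun n => ?_
  match n with
  | 0 =>
    have h := cantorSet_subset_unitInterval hx
    exact ⟨by linarith [h.1], by linarith [h.2]⟩
  | n + 1 => exact Or.inl ⟨x, Set.mem_iInter.mp hx n, rfl⟩

lemma third_pow_mem_cantorSet (n : ℕ) : (1 / 3 : ℝ) ^ n ∈ cantorSet := by
  induction n with
  | zero => simpa using one_mem_cantorSet
  | succ n ih => simpa [pow_succ, div_eq_mul_inv, mul_comm] using div_three_mem_cantorSet ih

lemma cantorSet_mem_split {x : ℝ} (hx : x ∈ cantorSet) : x ≤ 1/3 ∨ 2/3 ≤ x := by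
  have h1 : x ∈ preCantorSet 1 := Set.mem_iInter.mp hx 1
  rcases h1 with ⟨y, hy, rfl⟩ | ⟨y, hy, rfl⟩
  · left; have := preCantorSet_subset_unitInterval hy; linarith [this.2]
  · right; have := preCantorSet_subset_unitInterval hy; linarith [this.1]

lemma half_not_mem_cantorSet : (1/2 : ℝ) ∉ cantorSet := by
  intro h
  rcases cantorSet_mem_split h with h | h <;> linarith

lemma icc_subset_preCantorSet {x y : ℝ} (hxy : x ≤ y) {n : ℕ}
    (h : Icc x y ⊆ preCantorSet n) : y - x ≤ (1/3) ^ n := by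
  induction n generalizing x y with
  | zero =>
    have h0 := h ⟨le_refl x, hxy⟩
    have h1 := h ⟨hxy, le_refl y⟩
    simp only [preCantorSet_zero] at h0 h1
    simpa using by linarith [h0.1, h1.2]
  | succ n ih =>
    -- each point of Icc x y is in left or right branch
    have mem_le : ∀ z ∈ Icc x y, z ≤ 1/3 ∨ 2/3 ≤ z := by
      intro z hz
      rcases h hz with ⟨w, hw, rfl⟩ | ⟨w, hw, rfl⟩
      · left; have := preCantorSet_subset_unitInterval hw; linarith [this.2]
      · right; have := preCantorSet_subset_unitInterval hw; linarith [this.1]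
    rcases mem_le x ⟨le_refl x, hxy⟩ with hxl | hxr
    · -- claim y ≤ 1/3
      have hy3 : y ≤ 1/3 := by
        rcases mem_le y ⟨hxy, le_refl y⟩ with h' | h'
        · exact h'
        · exfalso
          have hmem : (1/2 : ℝ) ∈ Icc x y := ⟨by linarith, by linarith⟩
          rcases mem_le _ hmem with h'' | h'' <;> linarith
      -- Icc (3x) (3y) ⊆ preCantorSet n
      have hsub : Icc (3*x) (3*y) ⊆ preCantorSet n := by
        intro z hz
        have hz3 : z / 3 ∈ Icc x y := ⟨by linarith [hz.1], by linarith [hz.2]⟩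
        rcases h hz3 with ⟨w, hw, hwe⟩ | ⟨w, hw, hwe⟩
        · have : w = z := by field_simp at hwe; linarith
          rwa [← this]
        · exfalso
          have hw1 := preCantorSet_subset_unitInterval hw
          have hwe' : (2 + w) / 3 = z / 3 := hwe
          have : z / 3 ≤ 1/3 := by linarith [hz.2]
          linarith [hw1.1]
      have := ih (by linarith) hsub
      rw [pow_succ]
      linarith
    · -- x ≥ 2/3, so all of Icc in right branch
      have hsub : Icc (3*x - 2) (3*y - 2) ⊆ preCantorSet n := by
        intro z hz
        have hz3 : (2 + z) / 3 ∈ Icc x y := ⟨by linarith [hz.1], by linarith [hz.2]⟩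
        rcases h hz3 with ⟨w, hw, hwe⟩ | ⟨w, hw, hwe⟩
        · exfalso
          have hw1 := preCantorSet_subset_unitInterval hw
          have hwe' : w / 3 = (2 + z) / 3 := hwe
          linarith [hw1.2, hz.1]
        · have : w = z := by field_simp at hwe; linarith
          rwa [← this]
      have := ih (by linarith) hsub
      rw [pow_succ]
      linarith

lemma cantorSet_preconnected_subsingleton {T : Set ℝ} (hT : T ⊆ cantorSet)
    (hc : IsPreconnected T) : T.Subsingleton := by
  intro a ha b hb
  by_contra hne
  wlog hab : a < b generalizing a b
  · exact this hb ha (Ne.symm hne) (lt_of_le_of_ne (not_lt.mp hab) (Ne.symm hne))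
  have hord := hc.ordConnected
  have hicc : Icc a b ⊆ cantorSet := fun z hz => hT (hord.out ha hb hz)
  obtain ⟨n, hn⟩ := exists_pow_lt_of_lt_one (by linarith : (0:ℝ) < b - a) (by norm_num : (1/3:ℝ) < 1)
  have := icc_subset_preCantorSet (le_of_lt hab) (fun z hz => Set.mem_iInter.mp (hicc hz) n)
  linarith





-- the planar model
noncomputable def fanMap (p : ↥cantorSet × unitInterval) : ℝ × ℝ :=
  ((1 - (p.2 : ℝ)) * (p.1 : ℝ) + (p.2 : ℝ) / 2, (p.2 : ℝ))

def fanSet : Set (ℝ × ℝ) := range fanMap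

noncomputable def apexPt : ℝ × ℝ := (1/2, 1)

lemma continuous_fanMap : Continuous fanMap := by
  unfold fanMap
  fun_prop

instance : CompactSpace ↥cantorSet := isCompact_iff_compactSpace.mp isCompact_cantorSet

instance : CompactSpace CantorFan := by
  constructor
  have : (univ : Set CantorFan) = Quot.mk cantorFanRel '' univ := by
    rw [image_univ]
    exact (Set.range_quot_mk cantorFanRel).symm
  rw [this]
  exact isCompact_univ.image continuous_quot_mk



lemma fanMap_rel {a b : ↥cantorSet × unitInterval} (h : cantorFanRel a b) :
    fanMap a = fanMap b := by
  obtain ⟨h1, h2⟩ := h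
  simp [fanMap, h1, h2]

noncomputable def toFanSet : CantorFan → ↥fanSet :=
  Quot.lift (fun p => ⟨fanMap p, mem_range_self p⟩) (fun _ _ h => Subtype.ext (fanMap_rel h))

lemma continuous_toFanSet : Continuous toFanSet :=
  continuous_quot_lift _ (continuous_fanMap.subtype_mk _)

lemma toFanSet_bijective : Function.Bijective toFanSet := by
  constructor
  · intro x y h
    induction x using Quot.ind with | _ p =>
    induction y using Quot.ind with | _ q =>
    have h' : fanMap p = fanMap q := congrArg Subtype.val h
    have hsnd : ((p.2 : ℝ)) = (q.2 : ℝ) := congrArg Prod.snd h'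
    by_cases h1 : (p.2 : ℝ) = 1
    · refine Quot.sound ⟨Subtype.ext h1, Subtype.ext ?_⟩
      rw [← hsnd]; exact h1
    · have hfst := congrArg Prod.fst h'
      simp only [fanMap] at hfst
      rw [← hsnd] at hfst
      have hne : (1 : ℝ) - (p.2 : ℝ) ≠ 0 := fun hh => h1 (by linarith)
      have hc : (p.1 : ℝ) = (q.1 : ℝ) := by
        have := mul_left_cancel₀ hne (by linarith : (1 - (p.2:ℝ)) * (p.1:ℝ) = (1 - (p.2:ℝ)) * (q.1:ℝ))
        exact this
      have : p = q := Prod.ext (Subtype.ext hc) (Subtype.ext hsnd)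
      rw [this]
  · rintro ⟨x, p, hp⟩
    exact ⟨Quot.mk _ p, Subtype.ext hp⟩

noncomputable def fanHomeo : CantorFan ≃ₜ ↥fanSet :=
  Continuous.homeoOfEquivCompactToT2
    (f := Equiv.ofBijective _ toFanSet_bijective) continuous_toFanSet

/-! ### Legs -/

noncomputable def leg (c : ℝ) : Set (ℝ × ℝ) := segment ℝ (c, 0) apexPt

lemma mem_leg_iff {c : ℝ} {p : ℝ × ℝ} :
    p ∈ leg c ↔ ∃ t ∈ Icc (0:ℝ) 1, p = ((1 - t) * c + t / 2, t) := by
  rw [leg, segment_eq_image]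
  constructor
  · rintro ⟨t, ht, rfl⟩
    exact ⟨t, ht, by simp [apexPt, Prod.ext_iff]; constructor <;> ring⟩
  · rintro ⟨t, ht, rfl⟩
    exact ⟨t, ht, by simp [apexPt, Prod.ext_iff]; constructor <;> ring⟩

lemma fanMap_mem_leg {c : ↥cantorSet} {t : unitInterval} : fanMap (c, t) ∈ leg (c : ℝ) :=
  mem_leg_iff.mpr ⟨t, t.2, rfl⟩

lemma fanSet_eq : fanSet = ⋃ c ∈ cantorSet, leg c := by
  ext p
  simp only [fanSet, mem_range, mem_iUnion]
  constructor
  · rintro ⟨⟨c, t⟩, rfl⟩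
    exact ⟨c, c.2, fanMap_mem_leg⟩
  · rintro ⟨c, hc, hp⟩
    obtain ⟨t, ht, rfl⟩ := mem_leg_iff.mp hp
    exact ⟨(⟨c, hc⟩, ⟨t, ht⟩), rfl⟩

lemma apexPt_mem_fanSet : apexPt ∈ fanSet := by
  refine ⟨(⟨0, zero_mem_cantorSet⟩, 1), ?_⟩
  simp [fanMap, apexPt]

noncomputable def ePt : ℝ × ℝ := (0, 0)
noncomputable def mPt : ℝ × ℝ := (1/4, 1/2)

lemma ePt_mem_fanSet : ePt ∈ fanSet := by
  refine ⟨(⟨0, zero_mem_cantorSet⟩, 0), ?_⟩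
  simp [fanMap, ePt]

lemma mPt_mem_fanSet : mPt ∈ fanSet := by
  refine ⟨(⟨0, zero_mem_cantorSet⟩, ⟨1/2, by norm_num, by norm_num⟩), ?_⟩
  simp only [fanMap, mPt, Prod.ext_iff]
  norm_num

lemma fanSet_snd_mem {p : ℝ × ℝ} (hp : p ∈ fanSet) : p.2 ∈ Icc (0:ℝ) 1 := by
  obtain ⟨⟨c, t⟩, rfl⟩ := hp
  exact t.2

lemma eq_apex_of_snd_eq_one {p : ℝ × ℝ} (hp : p ∈ fanSet) (h : p.2 = 1) : p = apexPt := by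
  obtain ⟨⟨c, t⟩, rfl⟩ := hp
  have : (t : ℝ) = 1 := h
  simp [fanMap, apexPt, Prod.ext_iff, this]

/-- the `c`-coordinate function -/
noncomputable def cProj (p : ℝ × ℝ) : ℝ := (p.1 - p.2 / 2) / (1 - p.2)

lemma cProj_fanMap {c : ↥cantorSet} {t : unitInterval} (h : (t : ℝ) ≠ 1) :
    cProj (fanMap (c, t)) = (c : ℝ) := by
  have hne : (1:ℝ) - (t:ℝ) ≠ 0 := fun hh => h (by linarith)
  simp only [cProj, fanMap, add_sub_cancel_right]
  exact mul_div_cancel_left₀ _ hne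

lemma continuousOn_cProj : ContinuousOn cProj {p : ℝ × ℝ | p.2 ≠ 1} := by
  apply ContinuousOn.div
  · fun_prop
  · fun_prop
  · intro p hp
    simp only [mem_setOf_eq] at hp
    intro hh
    exact hp (by linarith)

/-- Any preconnected subset of the fan avoiding the apex lies in a single leg. -/
lemma exists_leg_of_preconnected {S : Set (ℝ × ℝ)} (hS : S ⊆ fanSet)
    (hc : IsPreconnected S) (ha : apexPt ∉ S) :
    ∃ c ∈ cantorSet, S ⊆ leg c := by
  rcases S.eq_empty_or_nonempty with rfl | ⟨p₀, hp₀⟩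
  · exact ⟨0, zero_mem_cantorSet, empty_subset _⟩
  have hS1 : ∀ p ∈ S, p.2 ≠ 1 := by
    intro p hp h1
    exact ha (eq_apex_of_snd_eq_one (hS hp) h1 ▸ hp)
  have him : cProj '' S ⊆ cantorSet := by
    rintro x ⟨p, hp, rfl⟩
    obtain ⟨⟨c, t⟩, rfl⟩ := hS hp
    rw [cProj_fanMap (hS1 _ hp)]
    exact c.2
  have hpre : IsPreconnected (cProj '' S) :=
    hc.image _ (continuousOn_cProj.mono (fun p hp => hS1 p hp))
  have hsub := cantorSet_preconnected_subsingleton him hpre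
  refine ⟨cProj p₀, him ⟨p₀, hp₀, rfl⟩, ?_⟩
  intro p hp
  obtain ⟨⟨c, t⟩, rfl⟩ := hS hp
  have : cProj (fanMap (c, t)) = cProj p₀ :=
    hsub ⟨_, hp, rfl⟩ ⟨p₀, hp₀, rfl⟩
  rw [cProj_fanMap (hS1 _ hp)] at this
  rw [← this]
  exact fanMap_mem_leg




/-! ### Topological invariants -/

/-- `x` is a non-cut point of every subcontinuum. -/
def NonCutPt (X : Type*) [TopologicalSpace X] (x : X) : Prop :=
  ∀ K : Set X, IsCompact K → IsPreconnected K → x ∈ K → IsPreconnected (K \ {x})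

/-- the complement of `x` is preconnected. -/
def ConnCompl (X : Type*) [TopologicalSpace X] (x : X) : Prop :=
  IsPreconnected ({x}ᶜ : Set X)

lemma Homeomorph.image_eq_preimage' {X Y : Type*} [TopologicalSpace X] [TopologicalSpace Y]
    (h : X ≃ₜ Y) (s : Set X) : ⇑h '' s = ⇑h.symm ⁻¹' s := by
  rw [← Homeomorph.image_symm]; rfl

lemma NonCutPt.of_homeo {X Y : Type*} [TopologicalSpace X] [TopologicalSpace Y]
    (h : X ≃ₜ Y) {x : X} (hx : NonCutPt X x) : NonCutPt Y (h x) := by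
  intro K hK hKc hxK
  have hsymm : h '' (h.symm '' K) = K := by
    rw [Set.image_image]
    simp
  have h1 : IsPreconnected ((h.symm '' K) \ {x}) := by
    refine hx _ (hK.image h.symm.continuous) (hKc.image _ h.symm.continuous.continuousOn) ?_
    exact ⟨h x, hxK, h.symm_apply_apply x⟩
  have h2 := h1.image h h.continuous.continuousOn
  rwa [Set.image_diff h.injective, Set.image_singleton, hsymm] at h2

lemma ConnCompl.of_homeo {X Y : Type*} [TopologicalSpace X] [TopologicalSpace Y]
    (h : X ≃ₜ Y) {x : X} (hx : ConnCompl X x) : ConnCompl Y (h x) := by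
  have h2 := hx.image h h.continuous.continuousOn
  rwa [Set.image_compl_eq h.bijective, Set.image_singleton] at h2

lemma nonCutPt_homeo_iff {X Y : Type*} [TopologicalSpace X] [TopologicalSpace Y]
    (h : X ≃ₜ Y) (x : X) : NonCutPt X x ↔ NonCutPt Y (h x) := by
  constructor
  · exact NonCutPt.of_homeo h
  · intro hy
    have := NonCutPt.of_homeo h.symm hy
    rwa [h.symm_apply_apply] at this

lemma connCompl_homeo_iff {X Y : Type*} [TopologicalSpace X] [TopologicalSpace Y]
    (h : X ≃ₜ Y) (x : X) : ConnCompl X x ↔ ConnCompl Y (h x) := by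
  constructor
  · exact ConnCompl.of_homeo h
  · intro hy
    have := ConnCompl.of_homeo h.symm hy
    rwa [h.symm_apply_apply] at this

/-! ### Transfer between the subtype and the ambient set -/

lemma isPreconnected_val_image {F : Set (ℝ × ℝ)} {S : Set ↥F} :
    IsPreconnected (Subtype.val '' S) ↔ IsPreconnected S :=
  Topology.IsInducing.subtypeVal.isPreconnected_image

lemma isCompact_val_image {F : Set (ℝ × ℝ)} {S : Set ↥F} :
    IsCompact (Subtype.val '' S) ↔ IsCompact S :=
  (Topology.IsEmbedding.subtypeVal.isCompact_iff).symm

/-- Ambient version of `NonCutPt` for a subset of the plane. -/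
def NonCutAmb (F : Set (ℝ × ℝ)) (x : ℝ × ℝ) : Prop :=
  ∀ K : Set (ℝ × ℝ), K ⊆ F → IsCompact K → IsPreconnected K → x ∈ K →
    IsPreconnected (K \ {x})

lemma val_image_diff_singleton {F : Set (ℝ × ℝ)} (x : ↥F) (S : Set ↥F) :
    Subtype.val '' (S \ {x}) = Subtype.val '' S \ {(x : ℝ × ℝ)} := by
  rw [Set.image_diff Subtype.val_injective, Set.image_singleton]

lemma nonCutPt_subtype_iff {F : Set (ℝ × ℝ)} (x : ↥F) :
    NonCutPt ↥F x ↔ NonCutAmb F (x : ℝ × ℝ) := by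
  constructor
  · intro hx K hKF hK hKc hxK
    set K' : Set ↥F := Subtype.val ⁻¹' K with hK'
    have himg : Subtype.val '' K' = K := by
      rw [hK', Subtype.image_preimage_coe, Set.inter_eq_right.mpr hKF]
    have h1 : IsPreconnected (K' \ {x}) := by
      refine hx K' (isCompact_val_image.mp (by rwa [himg]))
        (isPreconnected_val_image.mp (by rwa [himg])) hxK
    have := isPreconnected_val_image.mpr h1
    rwa [val_image_diff_singleton, himg] at this
  · intro hx K hK hKc hxK
    have h1 : IsPreconnected ((Subtype.val '' K) \ {(x : ℝ × ℝ)}) := by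
      refine hx _ (by rintro p ⟨q, _, rfl⟩; exact q.2) (isCompact_val_image.mpr hK)
        (isPreconnected_val_image.mpr hKc) ⟨x, hxK, rfl⟩
    rw [← val_image_diff_singleton] at h1
    exact isPreconnected_val_image.mp h1

lemma connCompl_subtype_iff {F : Set (ℝ × ℝ)} (x : ↥F) :
    ConnCompl ↥F x ↔ IsPreconnected (F \ {(x : ℝ × ℝ)}) := by
  rw [ConnCompl, ← isPreconnected_val_image]
  have : Subtype.val '' ({x}ᶜ : Set ↥F) = F \ {(x : ℝ × ℝ)} := by
    ext p
    constructor
    · rintro ⟨q, hq, rfl⟩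
      exact ⟨q.2, fun h => hq (Subtype.ext h)⟩
    · rintro ⟨hpF, hpx⟩
      exact ⟨⟨p, hpF⟩, fun h => hpx (congrArg Subtype.val h), rfl⟩
  rw [this]

/-! ### Computations in the planar fan -/

lemma isCompact_leg (c : ℝ) : IsCompact (leg c) := by
  rw [leg, segment_eq_image]
  exact isCompact_Icc.image (by fun_prop)

lemma isPreconnected_leg (c : ℝ) : IsPreconnected (leg c) :=
  (convex_segment _ _).isPreconnected

lemma apexPt_mem_leg (c : ℝ) : apexPt ∈ leg c :=
  mem_leg_iff.mpr ⟨1, by norm_num, by simp [apexPt]⟩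

noncomputable def legParam (t : ℝ) : ℝ × ℝ := (t / 2, t)

lemma legParam_mem_leg {t : ℝ} (ht : t ∈ Set.Icc (0:ℝ) 1) : legParam t ∈ leg 0 :=
  mem_leg_iff.mpr ⟨t, ht, by simp [legParam]⟩

lemma mem_leg_zero_iff {p : ℝ × ℝ} : p ∈ leg 0 ↔ ∃ t ∈ Set.Icc (0:ℝ) 1, p = legParam t := by
  rw [mem_leg_iff]
  constructor
  · rintro ⟨t, ht, rfl⟩; exact ⟨t, ht, by simp [legParam]⟩
  · rintro ⟨t, ht, rfl⟩; exact ⟨t, ht, by simp [legParam]⟩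

lemma continuous_legParam : Continuous legParam := by unfold legParam; fun_prop

lemma notPreconnected_of_split {s u v : Set (ℝ × ℝ)} (hu : IsOpen u) (hv : IsOpen v)
    (hsub : s ⊆ u ∪ v) (hne1 : (s ∩ u).Nonempty) (hne2 : (s ∩ v).Nonempty)
    (hdis : u ∩ v = ∅) : ¬ IsPreconnected s := by
  intro h
  obtain ⟨p, _, hp⟩ := h u v hu hv hsub hne1 hne2
  rw [hdis] at hp
  exact hp

lemma one_zero_mem_fanSet : ((1:ℝ), (0:ℝ)) ∈ fanSet := by
  refine ⟨(⟨1, one_mem_cantorSet⟩, 0), ?_⟩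
  simp [fanMap, Prod.ext_iff]

lemma isOpen_fstlt : IsOpen {p : ℝ × ℝ | p.1 < 1/2} := isOpen_lt continuous_fst continuous_const
lemma isOpen_fstgt : IsOpen {p : ℝ × ℝ | 1/2 < p.1} := isOpen_lt continuous_const continuous_fst
lemma isOpen_sndlt : IsOpen {p : ℝ × ℝ | p.2 < 1/2} := isOpen_lt continuous_snd continuous_const
lemma isOpen_sndgt : IsOpen {p : ℝ × ℝ | 1/2 < p.2} := isOpen_lt continuous_const continuous_snd

lemma fst_disj : {p : ℝ × ℝ | p.1 < 1/2} ∩ {p : ℝ × ℝ | 1/2 < p.1} = ∅ := by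
  ext p
  simp only [Set.mem_inter_iff, Set.mem_setOf_eq, Set.mem_empty_iff_false, iff_false, not_and,
    not_lt]
  intro h; linarith

lemma snd_disj : {p : ℝ × ℝ | p.2 < 1/2} ∩ {p : ℝ × ℝ | 1/2 < p.2} = ∅ := by
  ext p
  simp only [Set.mem_inter_iff, Set.mem_setOf_eq, Set.mem_empty_iff_false, iff_false, not_and,
    not_lt]
  intro h; linarith

lemma ePt_ne_apexPt : ePt ≠ apexPt := by
  simp [ePt, apexPt, Prod.ext_iff]

lemma mem_leg_fst_lt {c : ℝ} {p : ℝ × ℝ} (hc : c < 1/2) (hp : p ∈ leg c) (hpa : p ≠ apexPt) :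
    p.1 < 1/2 := by
  obtain ⟨t, ht, rfl⟩ := mem_leg_iff.mp hp
  have ht1 : t ≠ 1 := by
    rintro rfl
    exact hpa (by simp [apexPt, Prod.ext_iff])
  have : t < 1 := lt_of_le_of_ne ht.2 ht1
  simp only []
  nlinarith

lemma mem_leg_fst_gt {c : ℝ} {p : ℝ × ℝ} (hc : 1/2 < c) (hp : p ∈ leg c) (hpa : p ≠ apexPt) :
    1/2 < p.1 := by
  obtain ⟨t, ht, rfl⟩ := mem_leg_iff.mp hp
  have ht1 : t ≠ 1 := by
    rintro rfl
    exact hpa (by simp [apexPt, Prod.ext_iff])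
  have : t < 1 := lt_of_le_of_ne ht.2 ht1
  simp only []
  nlinarith

/-- The complement of the apex in the fan is not preconnected. -/
lemma not_connCompl_apex : ¬ IsPreconnected (fanSet \ {apexPt}) := by
  have hcov : fanSet \ {apexPt} ⊆ {p : ℝ × ℝ | p.1 < 1/2} ∪ {p : ℝ × ℝ | 1/2 < p.1} := by
    rintro p ⟨hp, hpa⟩
    rw [Set.mem_singleton_iff] at hpa
    rw [fanSet_eq] at hp
    obtain ⟨c, hc, hpc⟩ := Set.mem_iUnion₂.mp hp
    have hcne : c ≠ 1/2 := fun h => half_not_mem_cantorSet (h ▸ hc)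
    rcases lt_or_gt_of_ne hcne with h | h
    · exact Or.inl (mem_leg_fst_lt h hpc hpa)
    · exact Or.inr (mem_leg_fst_gt h hpc hpa)
  have hne1 : ((fanSet \ {apexPt}) ∩ {p : ℝ × ℝ | p.1 < 1/2}).Nonempty :=
    ⟨ePt, ⟨ePt_mem_fanSet, by simpa using ePt_ne_apexPt⟩, by simp [ePt]⟩
  have hne2 : ((fanSet \ {apexPt}) ∩ {p : ℝ × ℝ | 1/2 < p.1}).Nonempty :=
    ⟨((1:ℝ),(0:ℝ)), ⟨one_zero_mem_fanSet, by simp [apexPt, Prod.ext_iff]⟩, by norm_num⟩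
  exact notPreconnected_of_split isOpen_fstlt isOpen_fstgt hcov hne1 hne2 fst_disj

/-- The fan minus the apex, with the compact witness `leg 0 ∪ leg 1` splitting at the apex. -/
lemma not_nonCutAmb_apex : ¬ NonCutAmb fanSet apexPt := by
  intro h
  have hsub : leg 0 ∪ leg 1 ⊆ fanSet := by
    rw [fanSet_eq]
    rintro p (hp | hp)
    · exact Set.mem_biUnion zero_mem_cantorSet hp
    · exact Set.mem_biUnion one_mem_cantorSet hp
  have h1 := h (leg 0 ∪ leg 1) hsub ((isCompact_leg 0).union (isCompact_leg 1))
    (IsPreconnected.union apexPt (apexPt_mem_leg 0) (apexPt_mem_leg 1)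
      (isPreconnected_leg 0) (isPreconnected_leg 1)) (Or.inl (apexPt_mem_leg 0))
  have hcov : (leg 0 ∪ leg 1) \ {apexPt} ⊆
      {p : ℝ × ℝ | p.1 < 1/2} ∪ {p : ℝ × ℝ | 1/2 < p.1} := by
    rintro p ⟨hp | hp, hpa⟩
    · exact Or.inl (mem_leg_fst_lt (by norm_num) hp (by simpa using hpa))
    · exact Or.inr (mem_leg_fst_gt (by norm_num) hp (by simpa using hpa))
  have he0 : ePt ∈ leg 0 := mem_leg_iff.mpr ⟨0, by norm_num, by simp [ePt]⟩
  have he1 : ((1:ℝ),(0:ℝ)) ∈ leg 1 := mem_leg_iff.mpr ⟨0, by norm_num, by norm_num⟩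
  have hne1 : (((leg 0 ∪ leg 1) \ {apexPt}) ∩ {p : ℝ × ℝ | p.1 < 1/2}).Nonempty :=
    ⟨ePt, ⟨Or.inl he0, by simpa using ePt_ne_apexPt⟩, by simp [ePt]⟩
  have hne2 : (((leg 0 ∪ leg 1) \ {apexPt}) ∩ {p : ℝ × ℝ | 1/2 < p.1}).Nonempty :=
    ⟨((1:ℝ),(0:ℝ)), ⟨Or.inr he1, by simp [apexPt, Prod.ext_iff]⟩, by norm_num⟩
  exact notPreconnected_of_split isOpen_fstlt isOpen_fstgt hcov hne1 hne2 fst_disj h1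

/-- `leg 0` splits at the middle point. -/
lemma not_nonCutAmb_mPt : ¬ NonCutAmb fanSet mPt := by
  intro h
  have hsub : leg 0 ⊆ fanSet := by
    rw [fanSet_eq]
    exact fun p hp => Set.mem_biUnion zero_mem_cantorSet hp
  have hm : mPt ∈ leg 0 := mem_leg_iff.mpr ⟨1/2, by norm_num, by simp [mPt]; norm_num⟩
  have h1 := h (leg 0) hsub (isCompact_leg 0) (isPreconnected_leg 0) hm
  have hcov : leg 0 \ {mPt} ⊆ {p : ℝ × ℝ | p.2 < 1/2} ∪ {p : ℝ × ℝ | 1/2 < p.2} := by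
    rintro p ⟨hp, hpm⟩
    rw [Set.mem_singleton_iff] at hpm
    obtain ⟨t, ht, rfl⟩ := mem_leg_iff.mp hp
    have : t ≠ 1/2 := by
      rintro rfl
      exact hpm (by simp [mPt, Prod.ext_iff]; norm_num)
    rcases lt_or_gt_of_ne this with h' | h'
    · exact Or.inl h'
    · exact Or.inr h'
  have he0 : ePt ∈ leg 0 := mem_leg_iff.mpr ⟨0, by norm_num, by simp [ePt]⟩
  have hne1 : ((leg 0 \ {mPt}) ∩ {p : ℝ × ℝ | p.2 < 1/2}).Nonempty :=
    ⟨ePt, ⟨he0, by simp [ePt, mPt, Prod.ext_iff]⟩, by simp [ePt]⟩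
  have hne2 : ((leg 0 \ {mPt}) ∩ {p : ℝ × ℝ | 1/2 < p.2}).Nonempty :=
    ⟨apexPt, ⟨apexPt_mem_leg 0, by simp [apexPt, mPt, Prod.ext_iff]⟩, by norm_num [apexPt]⟩
  exact notPreconnected_of_split isOpen_sndlt isOpen_sndgt hcov hne1 hne2 snd_disj h1




lemma leg_subset_fanSet {c : ℝ} (hc : c ∈ cantorSet) : leg c ⊆ fanSet := by
  rw [fanSet_eq]
  exact fun p hp => Set.mem_biUnion hc hp

lemma mPt_not_mem_leg {c : ℝ} (hc : c ≠ 0) : mPt ∉ leg c := by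
  intro h
  obtain ⟨t, ht, hte⟩ := mem_leg_iff.mp h
  have h2 : (1/2 : ℝ) = t := congrArg Prod.snd hte
  have h1 : (1/4 : ℝ) = (1 - t) * c + t / 2 := congrArg Prod.fst hte
  apply hc
  rw [← h2] at h1
  linarith

lemma apexPt_eq_legParam_one : legParam 1 = apexPt := by
  simp [legParam, apexPt]

/-- The fan minus the middle point is preconnected. -/
lemma connCompl_mPt : IsPreconnected (fanSet \ {mPt}) := by
  set upper : Set (ℝ × ℝ) := legParam '' Set.Ioc (1/2 : ℝ) 1 with hupper
  set B : Set (ℝ × ℝ) := ⋃ c ∈ cantorSet \ {(0:ℝ)}, leg c with hB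
  set A : Set (ℝ × ℝ) := B ∪ upper with hA
  have hBpre : IsPreconnected B := by
    rw [hB, ← Set.sUnion_image]
    refine isPreconnected_sUnion apexPt _ ?_ ?_
    · rintro s ⟨c, hc, rfl⟩
      exact apexPt_mem_leg c
    · rintro s ⟨c, hc, rfl⟩
      exact isPreconnected_leg c
  have hupre : IsPreconnected upper :=
    isPreconnected_Ioc.image _ continuous_legParam.continuousOn
  have hApre : IsPreconnected A := by
    refine IsPreconnected.union apexPt ?_ ?_ hBpre hupre
    · exact Set.mem_biUnion ⟨one_mem_cantorSet, by norm_num⟩ (apexPt_mem_leg 1)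
    · exact ⟨1, ⟨by norm_num, le_refl 1⟩, apexPt_eq_legParam_one⟩
  have hAsub : A ⊆ fanSet \ {mPt} := by
    rintro p (hp | hp)
    · simp only [hB, Set.mem_iUnion] at hp
      obtain ⟨c, ⟨hc, hc0⟩, hpc⟩ := hp
      exact ⟨leg_subset_fanSet hc hpc, fun h => mPt_not_mem_leg (by simpa using hc0)
        (Set.mem_singleton_iff.mp h ▸ hpc)⟩
    · obtain ⟨t, ht, rfl⟩ := hp
      refine ⟨leg_subset_fanSet zero_mem_cantorSet (legParam_mem_leg ⟨le_trans (by norm_num) ht.1.le, ht.2⟩), ?_⟩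
      intro h
      have : (legParam t).2 = mPt.2 := by rw [Set.mem_singleton_iff.mp h]
      simp only [legParam, mPt] at this
      linarith [ht.1]
  have hlower : ∀ t ∈ Set.Ico (0:ℝ) (1/2), legParam t ∈ closure A := by
    intro t ht
    have htend : Filter.Tendsto (fun n : ℕ => ((1 - t) * (1/3)^n + t / 2, t)) Filter.atTop
        (nhds (legParam t)) := by
      rw [legParam]
      refine Filter.Tendsto.prodMk_nhds ?_ tendsto_const_nhds
      have : Filter.Tendsto (fun n : ℕ => (1 - t) * (1/3)^n + t/2) Filter.atTop
          (nhds ((1 - t) * 0 + t/2)) :=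
        (tendsto_const_nhds.mul (tendsto_pow_atTop_nhds_zero_of_lt_one (by norm_num)
          (by norm_num))).add tendsto_const_nhds
      simpa using this
    refine mem_closure_of_tendsto htend (Filter.Eventually.of_forall fun n => ?_)
    refine Or.inl (Set.mem_biUnion ⟨third_pow_mem_cantorSet n, ?_⟩ ?_)
    · simp only [Set.mem_singleton_iff]
      positivity
    · exact mem_leg_iff.mpr ⟨t, ⟨ht.1, by linarith [ht.2]⟩, rfl⟩
  have hcov : fanSet \ {mPt} ⊆ closure A := by
    rintro p ⟨hp, hpm⟩
    rw [Set.mem_singleton_iff] at hpm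
    rw [fanSet_eq] at hp
    obtain ⟨c, hc, hpc⟩ := Set.mem_iUnion₂.mp hp
    by_cases hc0 : c = 0
    · subst hc0
      obtain ⟨t, ht, rfl⟩ := mem_leg_zero_iff.mp hpc
      have htne : t ≠ 1/2 := by
        intro h
        exact hpm (by simp [legParam, mPt, h]; norm_num)
      rcases lt_or_gt_of_ne htne with h | h
      · exact hlower t ⟨ht.1, h⟩
      · exact subset_closure (Or.inr ⟨t, ⟨h, ht.2⟩, rfl⟩)
    · exact subset_closure (Or.inl (Set.mem_biUnion ⟨hc, hc0⟩ hpc))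
  exact hApre.subset_closure hAsub hcov




/-- Boundary bumping via quasicomponents: in a compact preconnected set, the connected
component of `x` in `K ∩ closedBall x r` reaches the boundary sphere, provided `K` has a
point outside the ball. -/
lemma core_boundary {K : Set (ℝ × ℝ)} (hK : IsCompact K) (hKc : IsPreconnected K)
    {x : ℝ × ℝ} (hx : x ∈ K) {r : ℝ} (hr : 0 < r) {w : ℝ × ℝ} (hw : w ∈ K)
    (hwr : w ∉ ball x r) :
    ∃ q ∈ connectedComponentIn (K ∩ closedBall x r) x, dist q x = r := by
  set Kr := K ∩ closedBall x r with hKrdef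
  have hKrc : IsCompact Kr := hK.inter_right Metric.isClosed_closedBall
  have hxKr : x ∈ Kr := ⟨hx, mem_closedBall_self hr.le⟩
  by_cases hsub : connectedComponentIn Kr x ⊆ ball x r
  · exfalso
    haveI : CompactSpace ↥Kr := isCompact_iff_compactSpace.mp hKrc
    set x' : ↥Kr := ⟨x, hxKr⟩ with hx'
    have hcc := connectedComponent_eq_iInter_isClopen x'
    have himg : Subtype.val '' connectedComponent x' = connectedComponentIn Kr x :=
      (connectedComponentIn_eq_image hxKr).symm
    set Ω : Set ↥Kr := Subtype.val ⁻¹' (ball x r) with hΩdef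
    have hΩo : IsOpen Ω := isOpen_ball.preimage continuous_subtype_val
    have hccΩ : connectedComponent x' ⊆ Ω := by
      intro z hz
      exact hsub (himg ▸ (Set.mem_image_of_mem _ hz))
    have hcompl : IsCompact Ωᶜ := hΩo.isClosed_compl.isCompact
    have hinter : Ωᶜ ∩ ⋂ (Z : {Z : Set ↥Kr // IsClopen Z ∧ x' ∈ Z}), (Z : Set ↥Kr) = ∅ := by
      rw [← hcc]
      rw [Set.eq_empty_iff_forall_notMem]
      rintro z ⟨hz1, hz2⟩
      exact hz1 (hccΩ hz2)
    obtain ⟨u, hu⟩ := hcompl.elim_finite_subfamily_closed _ (fun Z => Z.2.1.1) hinter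
    set Z : Set ↥Kr := ⋂ i ∈ u, (i : Set ↥Kr) with hZdef
    have hZclopen : IsClopen Z := Set.Finite.isClopen_biInter u.finite_toSet
      (fun i _ => i.2.1)
    have hxZ : x' ∈ Z := Set.mem_biInter (fun i _ => i.2.2)
    have hZΩ : Z ⊆ Ω := by
      intro z hz
      by_contra hzΩ
      have : z ∈ Ωᶜ ∩ ⋂ i ∈ u, (i : Set ↥Kr) := ⟨hzΩ, hz⟩
      rw [hu] at this
      exact this
    obtain ⟨O₀, hO₀o, hO₀e⟩ := isOpen_induced_iff.mp hZclopen.2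
    set Zv : Set (ℝ × ℝ) := Subtype.val '' Z with hZvdef
    have hZv1 : Zv = K ∩ (O₀ ∩ ball x r) := by
      apply Set.Subset.antisymm
      · rintro p ⟨z, hz, rfl⟩
        refine ⟨z.2.1, ?_, hZΩ hz⟩
        have : z ∈ Subtype.val ⁻¹' O₀ := hO₀e ▸ hz
        exact this
      · rintro p ⟨hpK, hpO, hpb⟩
        have hpKr : p ∈ Kr := ⟨hpK, ball_subset_closedBall hpb⟩
        refine ⟨⟨p, hpKr⟩, ?_, rfl⟩
        rw [← hO₀e]
        exact hpO
    have hZvclosed : IsClosed Zv :=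
      ((hZclopen.1.isCompact).image continuous_subtype_val).isClosed
    obtain ⟨y, hy⟩ := hKc (O₀ ∩ ball x r) Zvᶜ (hO₀o.inter isOpen_ball)
      hZvclosed.isOpen_compl
      (by
        intro k hk
        by_cases hkZ : k ∈ Zv
        · exact Or.inl (hZv1 ▸ hkZ : k ∈ K ∩ (O₀ ∩ ball x r)).2
        · exact Or.inr hkZ)
      ⟨x, hx, (hZv1 ▸ (Set.mem_image_of_mem _ hxZ) : x ∈ K ∩ (O₀ ∩ ball x r)).2⟩
      ⟨w, hw, fun hwZ => hwr (hZv1 ▸ hwZ : w ∈ K ∩ (O₀ ∩ ball x r)).2.2⟩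
    have hyZv : y ∈ Zv := by
      rw [hZv1]
      exact ⟨hy.1, hy.2.1⟩
    exact hy.2.2 hyZv
  · rw [Set.not_subset] at hsub
    obtain ⟨q, hq, hqb⟩ := hsub
    refine ⟨q, hq, le_antisymm ?_ ?_⟩
    · exact mem_closedBall.mp (connectedComponentIn_subset _ _ hq).2
    · rw [mem_ball] at hqb
      exact not_lt.mp hqb




lemma leg_param_unique {c t c' t' : ℝ} (ht : t ≠ 1)
    (h : (((1 - t) * c + t / 2 : ℝ), t) = ((1 - t') * c' + t' / 2, t')) : t = t' ∧ c = c' := by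
  have h2 : t = t' := congrArg Prod.snd h
  subst h2
  have h1 : (1 - t) * c + t / 2 = (1 - t) * c' + t / 2 := congrArg Prod.fst h
  have hne : (1 : ℝ) - t ≠ 0 := fun hh => ht (by linarith)
  exact ⟨rfl, mul_left_cancel₀ hne (by linarith)⟩

lemma mem_leg_self_form {c : ℝ} {p : ℝ × ℝ} (hp : p ∈ leg c) :
    p = ((1 - p.2) * c + p.2 / 2, p.2) ∧ p.2 ∈ Set.Icc (0:ℝ) 1 := by
  obtain ⟨t, ht, rfl⟩ := mem_leg_iff.mp hp
  exact ⟨rfl, ht⟩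

lemma ePt_mem_leg : ePt ∈ leg 0 := mem_leg_iff.mpr ⟨0, by norm_num, by simp [ePt]⟩

lemma eq_zero_of_ePt_mem_leg {c : ℝ} (h : ePt ∈ leg c) : c = 0 := by
  have := (mem_leg_self_form h).1
  have h1 : (0 : ℝ) = (1 - (0:ℝ)) * c + 0 / 2 := by
    have := congrArg Prod.fst this
    simpa [ePt] using this
  linarith

lemma legParam_ne_ePt {t : ℝ} (ht : t ≠ 0) : legParam t ≠ ePt := by
  intro h
  exact ht (by simpa [legParam, ePt, Prod.ext_iff] using congrArg Prod.snd h)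

lemma leg_interval {c : ℝ} {T : Set (ℝ × ℝ)} (hT : T ⊆ leg c) (hpre : IsPreconnected T)
    {p q : ℝ × ℝ} (hp : p ∈ T) (hq : q ∈ T) {t : ℝ} (h1 : p.2 ≤ t) (h2 : t ≤ q.2) :
    ((1 - t) * c + t / 2, t) ∈ T := by
  have hJ : IsPreconnected (Prod.snd '' T) := hpre.image _ continuous_snd.continuousOn
  have hord := hJ.ordConnected
  have hmem : t ∈ Prod.snd '' T :=
    hord.out ⟨p, hp, rfl⟩ ⟨q, hq, rfl⟩ ⟨h1, h2⟩
  obtain ⟨z, hz, rfl⟩ := hmem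
  have hzf := (mem_leg_self_form (hT hz)).1
  rwa [← hzf]

lemma dist_leg_pts {c t1 t2 : ℝ} (hc : c ∈ Set.Icc (0:ℝ) 1) :
    dist ((((1 - t1) * c + t1 / 2 : ℝ), t1) : ℝ × ℝ) (((1 - t2) * c + t2 / 2 : ℝ), t2)
      = |t1 - t2| := by
  rw [Prod.dist_eq]
  have h2 : dist t1 t2 = |t1 - t2| := Real.dist_eq t1 t2
  have h1 : dist ((1 - t1) * c + t1 / 2) ((1 - t2) * c + t2 / 2) = |t1 - t2| * |1/2 - c| := by
    rw [Real.dist_eq, ← abs_mul]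
    congr 1
    ring
  rw [h1, h2]
  have hle : |t1 - t2| * |1/2 - c| ≤ |t1 - t2| := by
    apply mul_le_of_le_one_right (abs_nonneg _)
    rw [abs_le]
    constructor <;> [linarith [hc.2]; linarith [hc.1]]
  exact sup_eq_right.mpr hle

lemma apex_not_mem_closedBall {x : ℝ × ℝ} (hx2 : x.2 ≤ 1/4) {r : ℝ} (hr : r ≤ 1/2) :
    apexPt ∉ closedBall x r := by
  intro h
  rw [mem_closedBall] at h
  have h1 : dist apexPt.2 x.2 ≤ dist apexPt x := by
    rw [Prod.dist_eq]; exact le_max_right _ _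
  rw [Real.dist_eq] at h1
  have : |apexPt.2 - x.2| = 1 - x.2 := by
    rw [abs_of_nonneg (by simp [apexPt]; linarith)]
    simp [apexPt]
  rw [this] at h1
  linarith

lemma fanSet_snd_nonneg {p : ℝ × ℝ} (hp : p ∈ fanSet) : 0 ≤ p.2 := (fanSet_snd_mem hp).1

/-- From boundary bumping: an initial segment of `leg 0` lies inside `K`. -/
lemma exists_legSeg {K : Set (ℝ × ℝ)} (hKF : K ⊆ fanSet) (hK : IsCompact K)
    (hKc : IsPreconnected K) (heK : ePt ∈ K) {ε : ℝ} (hε : 0 < ε) (hε2 : ε ≤ 1/2)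
    {w : ℝ × ℝ} (hw : w ∈ K) (hwb : w ∉ ball ePt ε) :
    ∀ t ∈ Set.Icc (0:ℝ) ε, legParam t ∈ K := by
  obtain ⟨q, hqJ, hqd⟩ := core_boundary hK hKc heK hε hw hwb
  set J := connectedComponentIn (K ∩ closedBall ePt ε) ePt with hJdef
  have hJsub : J ⊆ K ∩ closedBall ePt ε := connectedComponentIn_subset _ _
  have hJpre : IsPreconnected J := isPreconnected_connectedComponentIn
  have hJfan : J ⊆ fanSet := fun p hp => hKF (hJsub hp).1
  have hJapex : apexPt ∉ J := fun h =>
    apex_not_mem_closedBall (by norm_num [ePt]) (le_trans hε2 (by norm_num)) (hJsub h).2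
  obtain ⟨c, hcC, hJleg⟩ := exists_leg_of_preconnected hJfan hJpre hJapex
  have heJ : ePt ∈ J := mem_connectedComponentIn ⟨heK, mem_closedBall_self hε.le⟩
  have hc0 : c = 0 := eq_zero_of_ePt_mem_leg (hJleg heJ)
  subst hc0
  -- q.2 = ε
  have hqform := (mem_leg_self_form (hJleg hqJ)).1
  have hqdist : dist q ePt = |q.2 - 0| := by
    conv_lhs => rw [hqform]
    have he : (ePt : ℝ × ℝ) = ((1 - (0:ℝ)) * 0 + 0 / 2, (0:ℝ)) := by norm_num [ePt]
    rw [he]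
    exact dist_leg_pts (by norm_num)
  have hq2 : q.2 = ε := by
    rw [hqdist] at hqd
    rw [abs_of_nonneg (by simpa using fanSet_snd_nonneg (hKF (hJsub hqJ).1))] at hqd
    simpa using hqd
  intro t ht
  have he2 : (ePt : ℝ × ℝ).2 = 0 := rfl
  have := leg_interval hJleg hJpre heJ hqJ (t := t) (by rw [he2]; exact ht.1)
    (by rw [hq2]; exact ht.2)
  have hform : ((1 - t) * 0 + t / 2, t) = legParam t := by simp [legParam]
  rw [hform] at this
  exact (hJsub this).1




lemma endpoint_case {K U V : Set (ℝ × ℝ)} (hKF : K ⊆ fanSet) (hK : IsCompact K)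
    (hKc : IsPreconnected K) (heK : ePt ∈ K)
    (hU : IsOpen U) (hV : IsOpen V) (heU : ePt ∉ U) (heV : ePt ∉ V)
    (hcov : K \ {ePt} ⊆ U ∪ V) (hdisj : (K \ {ePt}) ∩ (U ∩ V) = ∅)
    (hxV : ((K \ {ePt}) ∩ V).Nonempty)
    {s : ℝ} (hs : 0 < s) (hs4 : s ≤ 1/4)
    (hseg : ∀ t ∈ Set.Ioc (0:ℝ) s, legParam t ∈ K ∩ U) : False := by
  have hKcl : IsClosed K := hK.isClosed
  set B := K ∩ V with hBdef
  have hBU : B ∩ U = ∅ := by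
    rw [Set.eq_empty_iff_forall_notMem]
    rintro b ⟨⟨hbK, hbV⟩, hbU⟩
    have hbe : b ≠ ePt := fun h => heV (h ▸ hbV)
    exact Set.eq_empty_iff_forall_notMem.mp hdisj b ⟨⟨hbK, hbe⟩, hbU, hbV⟩
  -- every preconnected subset of K avoiding ePt and meeting V lies in B
  have hpiece : ∀ T : Set (ℝ × ℝ), T ⊆ K → IsPreconnected T → ePt ∉ T →
      (T ∩ V).Nonempty → T ⊆ B := by
    intro T hTK hTpre heT hTV p hp
    refine ⟨hTK hp, ?_⟩
    by_contra hpV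
    have hTcov : T ⊆ U ∪ V := fun z hz => hcov ⟨hTK hz, fun h => heT (Set.mem_singleton_iff.mp h ▸ hz)⟩
    have hpU : p ∈ U := (hTcov hp).resolve_right hpV
    obtain ⟨y, hyT, hyUV⟩ := hTpre U V hU hV hTcov ⟨p, hp, hpU⟩ hTV
    have hye : y ≠ ePt := fun h => heT (h ▸ hyT)
    exact Set.eq_empty_iff_forall_notMem.mp hdisj y ⟨⟨hTK hyT, hye⟩, hyUV⟩
  by_cases heB : ePt ∈ closure B
  · -- geometric contradiction
    set r : ℝ := s / 2 with hrdef
    set τ : ℝ := s / 4 with hτdef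
    have hτs : τ ∈ Set.Ioc (0:ℝ) s := ⟨by positivity, by linarith⟩
    have hwK : legParam s ∈ K := (hseg s ⟨hs, le_refl s⟩).1
    have hτU : legParam τ ∈ K ∩ U := hseg τ hτs
    -- choose approximating points in B
    have hbn : ∀ n : ℕ, ∃ b, b ∈ B ∧ dist b ePt < min (r/2) (1/(n+1)) := by
      intro n
      have hpos : (0:ℝ) < min (r/2) (1/(n+1)) := by
        apply lt_min
        · positivity
        · positivity
      obtain ⟨b, hb1, hb2⟩ := _root_.mem_closure_iff.mp heB (ball ePt (min (r/2) (1/(n+1))))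
        isOpen_ball (mem_ball_self hpos)
      exact ⟨b, hb2, mem_ball.mp hb1⟩
    choose b hbB hbd using hbn
    -- key step: for each n, a point of B on the same leg as `b n` at height τ
    have key : ∀ n : ℕ, ∃ γ : ℝ, 0 ≤ γ ∧ γ ≤ 2 * (1/((n:ℝ)+1)) ∧ ((1 - τ) * γ + τ / 2, τ) ∈ B := by
      intro n
      have hbKn : b n ∈ K := (hbB n).1
      have hbVn : b n ∈ V := (hbB n).2
      have hbfan : b n ∈ fanSet := hKF hbKn
      rw [fanSet_eq] at hbfan
      obtain ⟨c, hcC, hbleg⟩ := Set.mem_iUnion₂.mp hbfan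
      have hcI : c ∈ Set.Icc (0:ℝ) 1 := cantorSet_subset_unitInterval hcC
      obtain ⟨t, hbI, hbform⟩ := mem_leg_iff.mp hbleg
      have ht2 : (b n).2 = t := by rw [hbform]
      set d : ℝ := dist (b n) ePt with hddef
      have hdmin : d < min (r/2) (1/(n+1)) := hbd n
      have hdr : d < r / 2 := lt_of_lt_of_le hdmin (min_le_left _ _)
      have hdn : d < 1/(n+1) := lt_of_lt_of_le hdmin (min_le_right _ _)
      have hd0 : 0 ≤ d := dist_nonneg
      have hr8 : r ≤ 1/8 := by rw [hrdef]; linarith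
      -- |t| ≤ d and |x| ≤ d
      have htd : |t| ≤ d ∧ |(b n).1| ≤ d := by
        constructor
        · have : dist (b n).2 ePt.2 ≤ d := by rw [hddef, Prod.dist_eq]; exact le_max_right _ _
          rw [ht2] at this
          simpa [Real.dist_eq, ePt] using this
        · have : dist (b n).1 ePt.1 ≤ d := by rw [hddef, Prod.dist_eq]; exact le_max_left _ _
          simpa [Real.dist_eq, ePt] using this
      have ht0 : 0 ≤ t := by rw [← ht2]; exact fanSet_snd_nonneg (hKF hbKn)
      have htle : t ≤ d := by rw [← abs_of_nonneg ht0]; exact htd.1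
      -- bound on c
      have hcd : c ≤ 2 * d := by
        have hx : (1 - t) * c + t / 2 ≤ d := by
          have := htd.2
          rw [abs_le] at this
          calc (1 - t) * c + t / 2 = (b n).1 := by rw [hbform]
            _ ≤ d := this.2
        nlinarith [hcI.1, hcI.2]
      -- c ≠ 0
      have hc0 : c ≠ 0 := by
        intro hcz
        subst hcz
        have hbeq : b n = legParam t := by
          rw [hbform]; simp [legParam]
        have hbne : b n ≠ ePt := fun h => heV (h ▸ hbVn)
        have ht0' : 0 < t := by
          rcases lt_or_eq_of_le ht0 with h | h
          · exact h
          · exfalso; exact hbne (by rw [hbeq, ← h]; simp [legParam, ePt])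
        have : legParam t ∈ K ∩ U := hseg t ⟨ht0', by linarith⟩
        have : b n ∈ B ∩ U := ⟨hbB n, hbeq ▸ this.2⟩
        rw [hBU] at this
        exact this
      -- boundary bumping at b n
      have hwfar : legParam s ∉ ball (b n) r := by
        rw [mem_ball]
        intro hlt
        have htri : dist (legParam s) ePt ≤ dist (legParam s) (b n) + d := dist_triangle _ _ _
        have hse : dist (legParam s) ePt = s := by
          have hform : (legParam s : ℝ × ℝ) = ((1 - s) * 0 + s / 2, s) := by simp [legParam]
          have he : (ePt : ℝ × ℝ) = ((1 - (0:ℝ)) * 0 + 0 / 2, (0:ℝ)) := by norm_num [ePt]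
          rw [hform, he, dist_leg_pts (by norm_num)]
          rw [abs_of_nonneg (by linarith)]; ring_nf
        rw [hse] at htri
        rw [hrdef] at hlt hdr
        linarith
      obtain ⟨q, hqJ, hqd⟩ := core_boundary hK hKc hbKn (by positivity : (0:ℝ) < r) hwK hwfar
      set J := connectedComponentIn (K ∩ closedBall (b n) r) (b n) with hJdef
      have hJsub : J ⊆ K ∩ closedBall (b n) r := connectedComponentIn_subset _ _
      have hJpre : IsPreconnected J := isPreconnected_connectedComponentIn
      have hbJ : b n ∈ J := mem_connectedComponentIn ⟨hbKn, mem_closedBall_self (by positivity)⟩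
      have hJfan : J ⊆ fanSet := fun p hp => hKF (hJsub hp).1
      have hJapex : apexPt ∉ J := by
        intro h
        refine apex_not_mem_closedBall (x := b n) ?_ (by linarith) (hJsub h).2
        linarith
      obtain ⟨c', hc'C, hJleg⟩ := exists_leg_of_preconnected hJfan hJpre hJapex
      -- c' = c
      have ht1 : t ≠ 1 := by intro h; rw [h] at htle; linarith
      have hcc' : c = c' := by
        have hb2 := (mem_leg_self_form (hJleg hbJ)).1
        rw [ht2] at hb2
        exact (leg_param_unique ht1 (hbform.symm.trans hb2)).2
      rw [← hcc'] at hJleg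
      -- q is on the leg at parameter t + r
      have hqform := (mem_leg_self_form (hJleg hqJ)).1
      have hqd2 : |q.2 - t| = r := by
        rw [← hqd]
        conv_rhs => rw [hqform, hbform]
        exact (dist_leg_pts hcI).symm
      have hq0 : 0 ≤ q.2 := fanSet_snd_nonneg (hKF (hJsub hqJ).1)
      have hq2 : q.2 = t + r := by
        rcases abs_eq (by positivity : (0:ℝ) ≤ r) |>.mp hqd2 with h | h
        · linarith
        · exfalso
          linarith
      -- τ between t and q.2
      have hz : ((1 - τ) * c + τ / 2, τ) ∈ J := by
        refine leg_interval hJleg hJpre hbJ hqJ ?_ ?_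
        · rw [ht2]; linarith
        · rw [hq2]; linarith
      -- J ⊆ B
      have heJ : ePt ∉ J := by
        intro h
        exact hc0 (eq_zero_of_ePt_mem_leg (hJleg h))
      have hJB : J ⊆ B := hpiece J (fun p hp => (hJsub hp).1) hJpre heJ ⟨b n, hbJ, hbVn⟩
      exact ⟨c, hcI.1, by linarith, hJB hz⟩

    choose γ hγ0 hγle hγB using key
    -- limit
    have hγtend : Filter.Tendsto γ Filter.atTop (nhds 0) := by
      refine squeeze_zero hγ0 hγle ?_
      have := tendsto_one_div_add_atTop_nhds_zero_nat (𝕜 := ℝ)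
      have h2 := this.const_mul (2:ℝ)
      simpa using h2
    have hztend : Filter.Tendsto (fun n => (((1 - τ) * γ n + τ / 2, τ) : ℝ × ℝ))
        Filter.atTop (nhds (legParam τ)) := by
      have h1 : Filter.Tendsto (fun n => (1 - τ) * γ n + τ / 2) Filter.atTop
          (nhds ((1 - τ) * 0 + τ / 2)) :=
        Filter.Tendsto.add (Filter.Tendsto.const_mul _ hγtend) tendsto_const_nhds
      have h2 : legParam τ = ((1 - τ) * 0 + τ/2, τ) := by simp [legParam]
      rw [h2]
      exact h1.prodMk_nhds tendsto_const_nhds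
    have hclτ : legParam τ ∈ closure B :=
      mem_closure_of_tendsto hztend (Filter.Eventually.of_forall fun n => hγB n)
    obtain ⟨y, hy1, hy2⟩ := _root_.mem_closure_iff.mp hclτ U hU hτU.2
    exact Set.eq_empty_iff_forall_notMem.mp hBU y ⟨hy2, hy1⟩
  · -- easy separation
    have hclB : closure B ⊆ B := by
      intro k hk
      have hkK : k ∈ K := by
        have := closure_mono Set.inter_subset_left hk
        rwa [hKcl.closure_eq] at this
      have hke : k ≠ ePt := fun h => heB (h ▸ hk)
      rcases hcov ⟨hkK, fun h => hke (Set.mem_singleton_iff.mp h)⟩ with hkU | hkV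
      · exfalso
        obtain ⟨y, hy1, hy2⟩ := _root_.mem_closure_iff.mp hk U hU hkU
        exact Set.eq_empty_iff_forall_notMem.mp hBU y ⟨hy2, hy1⟩
      · exact ⟨hkK, hkV⟩
    obtain ⟨xV, hxV1, hxV2⟩ := hxV
    obtain ⟨y, hy⟩ := hKc V (closure B)ᶜ hV isClosed_closure.isOpen_compl
      (by
        intro k hk
        by_cases hkB : k ∈ closure B
        · exact Or.inl (hclB hkB).2
        · exact Or.inr hkB)
      ⟨xV, hxV1.1, hxV2⟩
      ⟨ePt, heK, heB⟩
    exact hy.2.2 (subset_closure ⟨hy.1, hy.2.1⟩)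

theorem nonCutAmb_ePt : NonCutAmb fanSet ePt := by
  intro K hKF hK hKc heK
  intro U V hU hV hcov hneU hneV
  by_cases heU : ePt ∈ U
  · by_cases heV : ePt ∈ V
    · by_cases hcl : ePt ∈ closure (K \ {ePt})
      · obtain ⟨p, hp1, hp2⟩ := _root_.mem_closure_iff.mp hcl (U ∩ V) (hU.inter hV) ⟨heU, heV⟩
        exact ⟨p, hp2, hp1⟩
      · exfalso
        rw [_root_.mem_closure_iff] at hcl
        push_neg at hcl
        obtain ⟨W, hWo, heW, hWe⟩ := hcl
        obtain ⟨xU, hxU⟩ := hneU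
        obtain ⟨y, hy⟩ := hKc W {ePt}ᶜ hWo isClosed_singleton.isOpen_compl
          (by
            intro k hk
            by_cases hke : k = ePt
            · exact Or.inl (hke ▸ heW)
            · exact Or.inr hke)
          ⟨ePt, heK, heW⟩
          ⟨xU, hxU.1.1, hxU.1.2⟩
        exact Set.eq_empty_iff_forall_notMem.mp hWe y ⟨hy.2.1, hy.1, hy.2.2⟩
    · -- ePt ∈ U only
      obtain ⟨xV, hxV⟩ := hneV
      obtain ⟨y, hy⟩ := hKc U V hU hV
        (by
          intro k hk
          by_cases hke : k = ePt
          · exact Or.inl (hke ▸ heU)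
          · exact hcov ⟨hk, hke⟩)
        ⟨ePt, heK, heU⟩ ⟨xV, hxV.1.1, hxV.2⟩
      have hye : y ≠ ePt := fun h => heV (h ▸ hy.2.2)
      exact ⟨y, ⟨hy.1, hye⟩, hy.2⟩
  · by_cases heV : ePt ∈ V
    · -- ePt ∈ V only
      obtain ⟨xU, hxU⟩ := hneU
      obtain ⟨y, hy⟩ := hKc U V hU hV
        (by
          intro k hk
          by_cases hke : k = ePt
          · exact Or.inr (hke ▸ heV)
          · exact hcov ⟨hk, hke⟩)
        ⟨xU, hxU.1.1, hxU.2⟩ ⟨ePt, heK, heV⟩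
      have hye : y ≠ ePt := fun h => heU (h ▸ hy.2.1)
      exact ⟨y, ⟨hy.1, hye⟩, hy.2⟩
    · -- main case : ePt ∉ U ∪ V
      by_contra hempty
      rw [Set.not_nonempty_iff_eq_empty] at hempty
      by_cases hleg : K ⊆ leg 0
      · -- K inside leg 0 : K \ {ePt} is preconnected
        have hKform : ∀ k ∈ K, k = legParam k.2 := by
          intro k hk
          obtain ⟨t, ht, rfl⟩ := mem_leg_zero_iff.mp (hleg hk)
          simp [legParam]
        have hSeq : K \ {ePt} = legParam '' ((Prod.snd '' K) \ {0}) := by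
          ext p
          constructor
          · rintro ⟨hpK, hpe⟩
            refine ⟨p.2, ⟨⟨p, hpK, rfl⟩, ?_⟩, (hKform p hpK).symm⟩
            intro h0
            apply hpe
            rw [Set.mem_singleton_iff, hKform p hpK, Set.mem_singleton_iff.mp h0]
            simp [legParam, ePt]
          · rintro ⟨t, ⟨⟨k, hkK, rfl⟩, ht0⟩, rfl⟩
            refine ⟨by rw [← hKform k hkK]; exact hkK, ?_⟩
            intro h
            exact ht0 (by
              have := congrArg Prod.snd (Set.mem_singleton_iff.mp h)
              simpa [legParam, ePt] using this)
        have hJpre : IsPreconnected ((Prod.snd '' K) \ {0}) := by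
          have hJ : IsPreconnected (Prod.snd '' K) := hKc.image _ continuous_snd.continuousOn
          have hJord := hJ.ordConnected
          refine Set.OrdConnected.isPreconnected ⟨?_⟩
          rintro x ⟨hxJ, hx0⟩ y ⟨hyJ, hy0⟩ z hz
          refine ⟨hJord.out hxJ hyJ hz, ?_⟩
          have hxnn : 0 ≤ x := by
            obtain ⟨k, hk, rfl⟩ := hxJ
            exact fanSet_snd_nonneg (hKF hk)
          have hx0' : 0 < x :=
            lt_of_le_of_ne hxnn (fun h => hx0 (by simp [← h]))
          intro h0
          rw [Set.mem_singleton_iff] at h0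
          subst h0
          linarith [hz.1]
        have hSpre : IsPreconnected (K \ {ePt}) := by
          rw [hSeq]
          exact hJpre.image _ continuous_legParam.continuousOn
        obtain ⟨y, hy⟩ := hSpre U V hU hV hcov hneU hneV
        exact Set.eq_empty_iff_forall_notMem.mp hempty y hy
      · -- there is a point off leg 0
        rw [Set.not_subset] at hleg
        obtain ⟨k₀, hk₀K, hk₀⟩ := hleg
        have hk₀e : k₀ ≠ ePt := fun h => hk₀ (h ▸ ePt_mem_leg)
        have hdk : 0 < dist ePt k₀ := dist_pos.mpr (Ne.symm hk₀e)
        set ε : ℝ := min (dist ePt k₀ / 2) (1/4) with hεdef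
        have hε : 0 < ε := lt_min (by positivity) (by norm_num)
        have hε4 : ε ≤ 1/4 := min_le_right _ _
        have hwb : k₀ ∉ ball ePt ε := by
          rw [mem_ball]
          intro h
          rw [dist_comm] at h
          have h1 : ε ≤ dist ePt k₀ / 2 := min_le_left _ _
          linarith
        have hseg' : ∀ t ∈ Set.Icc (0:ℝ) ε, legParam t ∈ K :=
          exists_legSeg hKF hK hKc heK hε (by linarith) hk₀K hwb
        set legSegSet : Set (ℝ × ℝ) := legParam '' Set.Ioc 0 ε with hlsdef
        have hlssub : legSegSet ⊆ K \ {ePt} := by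
          rintro p ⟨t, ht, rfl⟩
          exact ⟨hseg' t ⟨ht.1.le, ht.2⟩, fun h =>
            legParam_ne_ePt (ne_of_gt ht.1) (Set.mem_singleton_iff.mp h)⟩
        have hlspre : IsPreconnected legSegSet :=
          isPreconnected_Ioc.image _ continuous_legParam.continuousOn
        by_cases hsu : (legSegSet ∩ U).Nonempty
        · by_cases hsv : (legSegSet ∩ V).Nonempty
          · obtain ⟨y, hy⟩ := hlspre U V hU hV (fun z hz => hcov (hlssub hz)) hsu hsv
            exact Set.eq_empty_iff_forall_notMem.mp hempty y ⟨hlssub hy.1, hy.2⟩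
          · -- legSeg ⊆ U side
            have hseg'' : ∀ t ∈ Set.Ioc (0:ℝ) ε, legParam t ∈ K ∩ U := by
              intro t ht
              have hmem : legParam t ∈ legSegSet := ⟨t, ht, rfl⟩
              have hKmem := (hlssub hmem).1
              rcases hcov (hlssub hmem) with h | h
              · exact ⟨hKmem, h⟩
              · exact absurd ⟨legParam t, hmem, h⟩ hsv
            exact endpoint_case hKF hK hKc heK hU hV heU heV hcov hempty hneV hε hε4 hseg''
        · -- legSeg ⊆ V side (swap roles)
          have hseg'' : ∀ t ∈ Set.Ioc (0:ℝ) ε, legParam t ∈ K ∩ V := by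
            intro t ht
            have hmem : legParam t ∈ legSegSet := ⟨t, ht, rfl⟩
            have hKmem := (hlssub hmem).1
            rcases hcov (hlssub hmem) with h | h
            · exact absurd ⟨legParam t, hmem, h⟩ hsu
            · exact ⟨hKmem, h⟩
          refine endpoint_case hKF hK hKc heK hV hU heV heU ?_ ?_ hneU hε hε4 hseg''
          · rwa [Set.union_comm]
          · rwa [Set.inter_comm V U]




noncomputable def codeTerm (x : ℕ → Bool) (i : ℕ) : ℝ := (if x i then 2 else 0) / 3 ^ (i + 1)

lemma codeTerm_nonneg (x : ℕ → Bool) (i : ℕ) : 0 ≤ codeTerm x i := by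
  rw [codeTerm]
  positivity

lemma codeTerm_le (x : ℕ → Bool) (i : ℕ) : codeTerm x i ≤ 2 / 3 ^ (i + 1) := by
  rw [codeTerm]
  gcongr
  split <;> norm_num

lemma summable_bound : Summable (fun i : ℕ => (2:ℝ) / 3 ^ (i + 1)) := by
  have h : (fun i : ℕ => (2:ℝ) / 3 ^ (i + 1)) = fun i : ℕ => (2/3) * (1/3) ^ i := by
    funext i
    rw [pow_succ]
    field_simp
    rw [← mul_pow]; norm_num
  rw [h]
  exact (summable_geometric_of_lt_one (by norm_num) (by norm_num)).mul_left _

lemma summable_codeTerm (x : ℕ → Bool) : Summable (codeTerm x) := by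
  refine Summable.of_nonneg_of_le (codeTerm_nonneg x) (codeTerm_le x) summable_bound

lemma tsum_bound : ∑' i : ℕ, (2:ℝ) / 3 ^ (i + 1) = 1 := by
  have h : (fun i : ℕ => (2:ℝ) / 3 ^ (i + 1)) = fun i : ℕ => (2/3) * (1/3) ^ i := by
    funext i
    rw [pow_succ]
    field_simp
    rw [← mul_pow]; norm_num
  rw [h, tsum_mul_left, tsum_geometric_of_lt_one (by norm_num) (by norm_num)]
  norm_num

noncomputable def cantorCode (x : ℕ → Bool) : ℝ := ∑' i, codeTerm x i

lemma cantorCode_nonneg (x : ℕ → Bool) : 0 ≤ cantorCode x :=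
  tsum_nonneg (codeTerm_nonneg x)

lemma cantorCode_le_one (x : ℕ → Bool) : cantorCode x ≤ 1 := by
  rw [← tsum_bound]
  exact Summable.tsum_le_tsum (codeTerm_le x) (summable_codeTerm x) summable_bound

lemma cantorCode_succ (x : ℕ → Bool) :
    cantorCode x = (if x 0 then 2 else 0) / 3 + cantorCode (fun i => x (i + 1)) / 3 := by
  rw [cantorCode, Summable.tsum_eq_zero_add (summable_codeTerm x)]
  congr 1
  · rw [codeTerm]; norm_num
  · rw [cantorCode, ← tsum_div_const]
    congr 1
    funext i
    rw [codeTerm, codeTerm]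
    rw [pow_succ]
    field_simp

lemma cantorCode_mem_preCantorSet (n : ℕ) (x : ℕ → Bool) : cantorCode x ∈ preCantorSet n := by
  induction n generalizing x with
  | zero => exact ⟨cantorCode_nonneg x, cantorCode_le_one x⟩
  | succ n ih =>
    rcases Bool.eq_false_or_eq_true (x 0) with h | h
    · refine Or.inr ⟨cantorCode (fun i => x (i+1)), ih _, ?_⟩
      rw [cantorCode_succ x, h]
      norm_num
      ring
    · refine Or.inl ⟨cantorCode (fun i => x (i+1)), ih _, ?_⟩
      rw [cantorCode_succ x, h]
      norm_num

lemma cantorCode_mem (x : ℕ → Bool) : cantorCode x ∈ cantorSet :=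
  Set.mem_iInter.mpr fun n => cantorCode_mem_preCantorSet n x

lemma continuous_cantorCode : Continuous cantorCode := by
  apply continuous_tsum (u := fun i => (2:ℝ) / 3 ^ (i + 1))
  · intro i
    rw [show (fun x : ℕ → Bool => codeTerm x i) = (fun b : Bool => ((if b then 2 else 0):ℝ) / 3 ^ (i+1)) ∘ (fun x : ℕ → Bool => x i) from rfl]
    exact Continuous.comp (by continuity) (continuous_apply i)
  · exact summable_bound
  · intro i x
    rw [Real.norm_eq_abs, abs_of_nonneg (codeTerm_nonneg x i)]
    exact codeTerm_le x i

lemma cantorCode_tail_bound (x : ℕ → Bool) (n : ℕ) :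
    ∑' i : ℕ, codeTerm x (n + 1 + i) ≤ 1 / 3 ^ (n + 1) := by
  have hs : Summable (fun i => codeTerm x (n + 1 + i)) := by
    exact (summable_nat_add_iff (n+1)).mpr (summable_codeTerm x) |>.congr (fun i => by ring_nf)
  have hb : Summable (fun i : ℕ => (2:ℝ) / 3 ^ (n + 1 + i + 1)) := by
    have := (summable_nat_add_iff (f := fun i : ℕ => (2:ℝ)/3^(i+1)) (n+1)).mpr summable_bound
    exact this.congr (fun i => by ring_nf)
  calc ∑' i : ℕ, codeTerm x (n + 1 + i) ≤ ∑' i : ℕ, (2:ℝ) / 3 ^ (n + 1 + i + 1) :=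
        Summable.tsum_le_tsum (fun i => codeTerm_le x _) hs hb
    _ = (1 / 3 ^ (n + 1)) * ∑' i : ℕ, (2:ℝ) / 3 ^ (i + 1) := by
        rw [← tsum_mul_left]
        congr 1
        funext i
        rw [pow_add, pow_add]
        field_simp
        ring
    _ = 1 / 3 ^ (n + 1) := by rw [tsum_bound, mul_one]

lemma cantorCode_injective : Function.Injective cantorCode := by
  intro x y hxy
  by_contra hne
  have hex : ∃ n, x n ≠ y n := by
    by_contra h
    push_neg at h
    exact hne (funext h)
  classical
  set n := Nat.find hex with hn
  have hdiff : x n ≠ y n := Nat.find_spec hex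
  have hbelow : ∀ i < n, x i = y i := fun i hi => not_not.mp (Nat.find_min hex hi)
  -- split sums at n
  have hsplit : ∀ z : ℕ → Bool, cantorCode z =
      (∑ i ∈ Finset.range n, codeTerm z i) + (codeTerm z n + ∑' i, codeTerm z (n + 1 + i)) := by
    intro z
    rw [cantorCode, ← Summable.sum_add_tsum_nat_add n (summable_codeTerm z)]
    congr 1
    rw [Summable.tsum_eq_zero_add ((summable_nat_add_iff n).mpr (summable_codeTerm z))]
    congr 1
    · congr 1; omega
    · congr 1; funext i; congr 1; omega
  have hsum_eq : ∑ i ∈ Finset.range n, codeTerm x i = ∑ i ∈ Finset.range n, codeTerm y i := by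
    apply Finset.sum_congr rfl
    intro i hi
    rw [codeTerm, codeTerm, hbelow i (Finset.mem_range.mp hi)]
  -- wlog x n = true
  have main : ∀ u v : ℕ → Bool, u n = true → v n = false →
      (∑ i ∈ Finset.range n, codeTerm u i = ∑ i ∈ Finset.range n, codeTerm v i) →
      cantorCode u ≠ cantorCode v := by
    intro u v hu hv hsum heq
    rw [hsplit u, hsplit v, hsum] at heq
    have h1 : codeTerm u n = 2 / 3 ^ (n+1) := by rw [codeTerm, hu]; norm_num
    have h2 : codeTerm v n = 0 := by rw [codeTerm, hv]; norm_num
    have h3 := cantorCode_tail_bound u n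
    have h4 := cantorCode_tail_bound v n
    have h5 : (0:ℝ) ≤ ∑' i, codeTerm u (n + 1 + i) := tsum_nonneg (fun i => codeTerm_nonneg u _)
    have h6 : (0:ℝ) ≤ ∑' i, codeTerm v (n + 1 + i) := tsum_nonneg (fun i => codeTerm_nonneg v _)
    have hpow : (0:ℝ) < 1 / 3 ^ (n+1) := by positivity
    rw [h1, h2] at heq
    have hc : (2:ℝ) / 3 ^ (n+1) + ∑' (i : ℕ), codeTerm u (n + 1 + i)
        = ∑' (i : ℕ), codeTerm v (n + 1 + i) := by linarith
    have h8 : (2:ℝ) / 3 ^ (n+1) = 2 * (1 / 3 ^ (n+1)) := by ring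
    rw [h8] at hc
    linarith
  rcases Bool.eq_false_or_eq_true (x n) with h | h
  · have hy : y n = false := by
      rcases Bool.eq_false_or_eq_true (y n) with h' | h'
      · exact absurd (h.trans h'.symm) hdiff
      · exact h'
    exact main x y h hy hsum_eq hxy
  · have hy : y n = true := by
      rcases Bool.eq_false_or_eq_true (y n) with h' | h'
      · exact h'
      · exact absurd (h.trans h'.symm) hdiff
    exact main y x hy h hsum_eq.symm hxy.symm




lemma cantorCode_approx (n : ℕ) : ∀ y ∈ preCantorSet n,
    ∃ x : ℕ → Bool, |cantorCode x - y| ≤ (1/3) ^ n := by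
  induction n with
  | zero =>
    intro y hy
    refine ⟨fun _ => false, ?_⟩
    have h0 : cantorCode (fun _ => false) = 0 := by
      have hz : ∀ i, codeTerm (fun _ => false) i = 0 := fun i => by rw [codeTerm]; norm_num
      calc cantorCode (fun _ => false) = ∑' _ : ℕ, (0:ℝ) := tsum_congr hz
        _ = 0 := tsum_zero
    rw [h0]
    rw [abs_of_nonpos (by linarith [hy.1])]
    simpa using hy.2
  | succ n ih =>
    rintro y (⟨z, hz, rfl⟩ | ⟨z, hz, rfl⟩)
    · obtain ⟨x, hx⟩ := ih z hz
      refine ⟨fun i => Nat.casesOn i false x, ?_⟩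
      have hc : cantorCode (fun i => Nat.casesOn i false x) = cantorCode x / 3 := by
        rw [cantorCode_succ]
        norm_num
      rw [hc]
      have : |cantorCode x / 3 - z / 3| = |cantorCode x - z| / 3 := by
        have h' : cantorCode x / 3 - z / 3 = (cantorCode x - z) / 3 := by ring
        rw [h', abs_div]
        norm_num
      rw [this, pow_succ]
      calc |cantorCode x - z| / 3 ≤ (1/3)^n / 3 := by linarith
        _ = (1/3)^n * (1/3) := by ring
    · obtain ⟨x, hx⟩ := ih z hz
      refine ⟨fun i => Nat.casesOn i true x, ?_⟩
      have hc : cantorCode (fun i => Nat.casesOn i true x) = (2 + cantorCode x) / 3 := by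
        rw [cantorCode_succ]
        norm_num
        ring
      rw [hc]
      have : |(2 + cantorCode x) / 3 - (2 + z) / 3| = |cantorCode x - z| / 3 := by
        have h' : (2 + cantorCode x) / 3 - (2 + z) / 3 = (cantorCode x - z) / 3 := by ring
        rw [h', abs_div]
        norm_num
      rw [this, pow_succ]
      calc |cantorCode x - z| / 3 ≤ (1/3)^n / 3 := by linarith
        _ = (1/3)^n * (1/3) := by ring

lemma cantorCode_surj : ∀ y ∈ cantorSet, ∃ x : ℕ → Bool, cantorCode x = y := by
  intro y hy
  have hrange : IsClosed (Set.range cantorCode) :=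
    (isCompact_range continuous_cantorCode).isClosed
  have hmem : y ∈ closure (Set.range cantorCode) := by
    rw [Metric.mem_closure_iff]
    intro ε hε
    obtain ⟨n, hn⟩ := exists_pow_lt_of_lt_one hε (by norm_num : (1/3:ℝ) < 1)
    obtain ⟨x, hx⟩ := cantorCode_approx n y (Set.mem_iInter.mp hy n)
    refine ⟨cantorCode x, Set.mem_range_self x, ?_⟩
    rw [Real.dist_eq, abs_sub_comm]
    calc |cantorCode x - y| ≤ (1/3)^n := hx
      _ < ε := hn
  rw [hrange.closure_eq] at hmem
  exact hmem

instance : CompactSpace (ℕ → Bool) := by infer_instance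

noncomputable def cantorCodeFun (x : ℕ → Bool) : ↥cantorSet := ⟨cantorCode x, cantorCode_mem x⟩

lemma cantorCodeFun_bijective : Function.Bijective cantorCodeFun := by
  constructor
  · intro a b h
    exact cantorCode_injective (congrArg Subtype.val h)
  · rintro ⟨y, hy⟩
    obtain ⟨x, hx⟩ := cantorCode_surj y hy
    exact ⟨x, Subtype.ext hx⟩

noncomputable def cantorHomeo : (ℕ → Bool) ≃ₜ ↥cantorSet :=
  Continuous.homeoOfEquivCompactToT2 (f := Equiv.ofBijective _ cantorCodeFun_bijective)
    (continuous_cantorCode.subtype_mk _)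

/-- xor translation homeomorphism of Cantor space -/
def xorHomeo (d : ℕ → Bool) : (ℕ → Bool) ≃ₜ (ℕ → Bool) where
  toFun x := fun i => xor (x i) (d i)
  invFun x := fun i => xor (x i) (d i)
  left_inv x := by
    funext i
    show xor (xor (x i) (d i)) (d i) = x i
    cases x i <;> cases d i <;> rfl
  right_inv x := by
    funext i
    show xor (xor (x i) (d i)) (d i) = x i
    cases x i <;> cases d i <;> rfl
  continuous_toFun := by
    apply continuous_pi
    intro i
    exact (continuous_of_discreteTopology (f := fun v : Bool => xor v (d i))).comp
      (continuous_apply i)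
  continuous_invFun := by
    apply continuous_pi
    intro i
    exact (continuous_of_discreteTopology (f := fun v : Bool => xor v (d i))).comp
      (continuous_apply i)

/-- The Cantor set is topologically homogeneous. -/
lemma cantorSet_homog (a b : ↥cantorSet) : ∃ g : ↥cantorSet ≃ₜ ↥cantorSet, g a = b := by
  set d : ℕ → Bool := fun i => xor (cantorHomeo.symm a i) (cantorHomeo.symm b i) with hd
  refine ⟨(cantorHomeo.symm.trans (xorHomeo d)).trans cantorHomeo, ?_⟩
  have h1 : (xorHomeo d) (cantorHomeo.symm a) = cantorHomeo.symm b := by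
    funext i
    show xor (cantorHomeo.symm a i) (xor (cantorHomeo.symm a i) (cantorHomeo.symm b i))
      = cantorHomeo.symm b i
    cases cantorHomeo.symm a i <;> cases cantorHomeo.symm b i <;> rfl
  simp only [Homeomorph.trans_apply]
  rw [h1]
  exact cantorHomeo.apply_symm_apply b




lemma continuous_rpow_const {α : ℝ} (hα : 0 ≤ α) : Continuous fun x : ℝ => x ^ α :=
  continuous_iff_continuousAt.mpr fun x => Real.continuousAt_rpow_const x α (Or.inr hα)

noncomputable def rpowIHomeo (α : ℝ) (hα : 0 < α) : unitInterval ≃ₜ unitInterval where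
  toFun t := ⟨(t : ℝ) ^ α, Real.rpow_nonneg t.2.1 α, Real.rpow_le_one t.2.1 t.2.2 hα.le⟩
  invFun t := ⟨(t : ℝ) ^ (1/α), Real.rpow_nonneg t.2.1 _,
    Real.rpow_le_one t.2.1 t.2.2 (by positivity)⟩
  left_inv t := by
    ext
    show ((t : ℝ) ^ α) ^ (1/α) = (t : ℝ)
    rw [← Real.rpow_mul t.2.1, mul_one_div, div_self hα.ne', Real.rpow_one]
  right_inv t := by
    ext
    show ((t : ℝ) ^ (1/α)) ^ α = (t : ℝ)
    rw [← Real.rpow_mul t.2.1, one_div, inv_mul_cancel₀ hα.ne', Real.rpow_one]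
  continuous_toFun := by
    apply Continuous.subtype_mk
    exact (continuous_rpow_const hα.le).comp continuous_subtype_val
  continuous_invFun := by
    apply Continuous.subtype_mk
    exact (continuous_rpow_const (by positivity)).comp continuous_subtype_val

lemma rpowIHomeo_snd_one {α : ℝ} (hα : 0 < α) (t : unitInterval) :
    ((rpowIHomeo α hα t : ℝ)) = 1 ↔ (t : ℝ) = 1 := by
  show ((t : ℝ) ^ α = 1) ↔ _
  constructor
  · intro h
    by_contra ht
    have hlt : (t : ℝ) < 1 := lt_of_le_of_ne t.2.2 ht
    have := Real.rpow_lt_one t.2.1 hlt hα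
    rw [h] at this
    exact lt_irrefl 1 this
  · intro h
    rw [h, Real.one_rpow]

/-- Lift a homeomorphism of `C × [0,1]` preserving the top to the Cantor fan. -/
noncomputable def liftHomeo (f : ↥cantorSet × unitInterval ≃ₜ ↥cantorSet × unitInterval)
    (hf : ∀ p : ↥cantorSet × unitInterval, p.2 = 1 ↔ (f p).2 = 1) : CantorFan ≃ₜ CantorFan where
  toFun := Quot.lift (fun p => Quot.mk cantorFanRel (f p))
    (fun a b hab => Quot.sound ⟨(hf a).mp hab.1, (hf b).mp hab.2⟩)
  invFun := Quot.lift (fun p => Quot.mk cantorFanRel (f.symm p))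
    (fun a b hab => Quot.sound
      ⟨(hf (f.symm a)).mpr (by rw [f.apply_symm_apply]; exact hab.1),
       (hf (f.symm b)).mpr (by rw [f.apply_symm_apply]; exact hab.2)⟩)
  left_inv := by
    intro x
    induction x using Quot.ind with | _ p =>
    show Quot.mk cantorFanRel (f.symm (f p)) = Quot.mk cantorFanRel p
    rw [f.symm_apply_apply]
  right_inv := by
    intro x
    induction x using Quot.ind with | _ p =>
    show Quot.mk cantorFanRel (f (f.symm p)) = Quot.mk cantorFanRel p
    rw [f.apply_symm_apply]
  continuous_toFun := continuous_quot_lift _ (continuous_quot_mk.comp f.continuous)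
  continuous_invFun := continuous_quot_lift _ (continuous_quot_mk.comp f.symm.continuous)

@[simp] lemma liftHomeo_mk (f : ↥cantorSet × unitInterval ≃ₜ ↥cantorSet × unitInterval)
    (hf : ∀ p : ↥cantorSet × unitInterval, p.2 = 1 ↔ (f p).2 = 1)
    (p : ↥cantorSet × unitInterval) :
    liftHomeo f hf (Quot.mk cantorFanRel p) = Quot.mk cantorFanRel (f p) := rfl

noncomputable def gHomeo (g : ↥cantorSet ≃ₜ ↥cantorSet) : CantorFan ≃ₜ CantorFan :=
  liftHomeo (g.prodCongr (Homeomorph.refl unitInterval)) (fun p => Iff.rfl)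

noncomputable def tHomeo (α : ℝ) (hα : 0 < α) : CantorFan ≃ₜ CantorFan :=
  liftHomeo ((Homeomorph.refl ↥cantorSet).prodCongr (rpowIHomeo α hα))
    (fun p => by
      constructor
      · intro h
        exact Subtype.ext ((rpowIHomeo_snd_one hα p.2).mpr (congrArg Subtype.val h))
      · intro h
        exact Subtype.ext ((rpowIHomeo_snd_one hα p.2).mp (congrArg Subtype.val h)))

/-! ### Orbits -/

lemma orbit_eq_of_exists {X : Type*} [TopologicalSpace X] {x y : X}
    (h : ∃ g : X ≃ₜ X, g x = y) : orbit X x = orbit X y := by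
  obtain ⟨g, hg⟩ := h
  ext z
  constructor
  · rintro ⟨h', rfl⟩
    refine ⟨g.symm.trans h', ?_⟩
    show h' (g.symm y) = h' x
    rw [← hg, g.symm_apply_apply]
  · rintro ⟨h', rfl⟩
    refine ⟨g.trans h', ?_⟩
    show h' (g x) = h' y
    rw [hg]

lemma orbit_exists_of_eq {X : Type*} [TopologicalSpace X] {x y : X}
    (h : orbit X x = orbit X y) : ∃ g : X ≃ₜ X, g x = y := by
  have hy : y ∈ orbit X y := ⟨Homeomorph.refl X, rfl⟩
  rw [← h] at hy
  exact hy

noncomputable def c0 : ↥cantorSet := ⟨0, zero_mem_cantorSet⟩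
noncomputable def half01 : unitInterval := ⟨1/2, by norm_num, by norm_num⟩
noncomputable def vF : CantorFan := Quot.mk cantorFanRel (c0, 1)
noncomputable def eF : CantorFan := Quot.mk cantorFanRel (c0, 0)
noncomputable def mF : CantorFan := Quot.mk cantorFanRel (c0, half01)

lemma orbit_classify (x : CantorFan) :
    orbit CantorFan x = orbit CantorFan vF ∨ orbit CantorFan x = orbit CantorFan eF ∨
      orbit CantorFan x = orbit CantorFan mF := by
  induction x using Quot.ind with | _ p =>
  obtain ⟨c, t⟩ := p
  by_cases ht1 : (t : ℝ) = 1
  · left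
    have heq : Quot.mk cantorFanRel (c, t) = vF :=
      Quot.sound ⟨Subtype.ext ht1, rfl⟩
    rw [heq]
  · by_cases ht0 : (t : ℝ) = 0
    · right; left
      obtain ⟨g, hg⟩ := cantorSet_homog c c0
      refine orbit_eq_of_exists ⟨gHomeo g, ?_⟩
      show Quot.mk cantorFanRel ((g.prodCongr (Homeomorph.refl unitInterval)) (c, t)) = eF
      have : (g.prodCongr (Homeomorph.refl unitInterval)) (c, t) = (c0, 0) := by
        have h2 : t = (0 : unitInterval) := Subtype.ext ht0
        simp [Homeomorph.prodCongr, hg, h2]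
      rw [this]
      rfl
    · right; right
      have ht0' : 0 < (t : ℝ) := lt_of_le_of_ne t.2.1 (Ne.symm ht0)
      have ht1' : (t : ℝ) < 1 := lt_of_le_of_ne t.2.2 ht1
      set α : ℝ := Real.log (1/2) / Real.log t with hαdef
      have hlogt : Real.log (t : ℝ) < 0 := Real.log_neg ht0' ht1'
      have hloghalf : Real.log (1/2 : ℝ) < 0 := Real.log_neg (by norm_num) (by norm_num)
      have hα : 0 < α := div_pos_of_neg_of_neg hloghalf hlogt
      have hrpow : (t : ℝ) ^ α = 1/2 := by
        rw [Real.rpow_def_of_pos ht0', hαdef, mul_comm, div_mul_cancel₀ _ (ne_of_lt hlogt),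
          Real.exp_log (by norm_num)]
      obtain ⟨g, hg⟩ := cantorSet_homog c c0
      refine orbit_eq_of_exists ⟨(gHomeo g).trans (tHomeo α hα), ?_⟩
      show tHomeo α hα (gHomeo g (Quot.mk cantorFanRel (c, t))) = mF
      show Quot.mk cantorFanRel (((Homeomorph.refl ↥cantorSet).prodCongr (rpowIHomeo α hα))
        ((g.prodCongr (Homeomorph.refl unitInterval)) (c, t))) = mF
      have : ((Homeomorph.refl ↥cantorSet).prodCongr (rpowIHomeo α hα))
          ((g.prodCongr (Homeomorph.refl unitInterval)) (c, t)) = (c0, half01) := by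
        refine Prod.ext ?_ (Subtype.ext ?_)
        · exact hg
        · show (t : ℝ) ^ α = (half01 : ℝ)
          rw [hrpow]
          rfl
      rw [this]
      rfl




lemma fanHomeo_vF : ((fanHomeo vF : ↥fanSet) : ℝ × ℝ) = apexPt := by
  show fanMap (c0, 1) = apexPt
  simp [fanMap, c0, apexPt, Prod.ext_iff]

lemma fanHomeo_eF : ((fanHomeo eF : ↥fanSet) : ℝ × ℝ) = ePt := by
  show fanMap (c0, 0) = ePt
  simp [fanMap, c0, ePt, Prod.ext_iff]

lemma fanHomeo_mF : ((fanHomeo mF : ↥fanSet) : ℝ × ℝ) = mPt := by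
  show fanMap (c0, half01) = mPt
  simp only [fanMap, c0, half01, mPt, Prod.ext_iff]
  norm_num

lemma nonCutPt_CF_iff (x : CantorFan) :
    NonCutPt CantorFan x ↔ NonCutAmb fanSet ((fanHomeo x : ↥fanSet) : ℝ × ℝ) :=
  (nonCutPt_homeo_iff fanHomeo x).trans (nonCutPt_subtype_iff _)

lemma connCompl_CF_iff (x : CantorFan) :
    ConnCompl CantorFan x ↔ IsPreconnected (fanSet \ {((fanHomeo x : ↥fanSet) : ℝ × ℝ)}) :=
  (connCompl_homeo_iff fanHomeo x).trans (connCompl_subtype_iff _)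

lemma not_nonCutPt_vF : ¬ NonCutPt CantorFan vF := by
  rw [nonCutPt_CF_iff, fanHomeo_vF]
  exact not_nonCutAmb_apex

lemma not_nonCutPt_mF : ¬ NonCutPt CantorFan mF := by
  rw [nonCutPt_CF_iff, fanHomeo_mF]
  exact not_nonCutAmb_mPt

lemma nonCutPt_eF : NonCutPt CantorFan eF := by
  rw [nonCutPt_CF_iff, fanHomeo_eF]
  exact nonCutAmb_ePt

lemma not_connCompl_vF : ¬ ConnCompl CantorFan vF := by
  rw [connCompl_CF_iff, fanHomeo_vF]
  exact not_connCompl_apex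

lemma connCompl_mF : ConnCompl CantorFan mF := by
  rw [connCompl_CF_iff, fanHomeo_mF]
  exact connCompl_mPt

lemma orbit_vF_ne_eF : orbit CantorFan vF ≠ orbit CantorFan eF := by
  intro h
  obtain ⟨g, hg⟩ := orbit_exists_of_eq h
  exact not_nonCutPt_vF ((nonCutPt_homeo_iff g vF).mpr (by rw [hg]; exact nonCutPt_eF))

lemma orbit_vF_ne_mF : orbit CantorFan vF ≠ orbit CantorFan mF := by
  intro h
  obtain ⟨g, hg⟩ := orbit_exists_of_eq h
  exact not_connCompl_vF ((connCompl_homeo_iff g vF).mpr (by rw [hg]; exact connCompl_mF))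

lemma orbit_eF_ne_mF : orbit CantorFan eF ≠ orbit CantorFan mF := by
  intro h
  obtain ⟨g, hg⟩ := orbit_exists_of_eq h
  exact not_nonCutPt_mF (by rw [← hg]; exact (nonCutPt_homeo_iff g eF).mp nonCutPt_eF)

theorem cantorFan_oneThirdHomogeneous' : OneOverHomogeneous CantorFan 3 := by
  rw [OneOverHomogeneous, Set.ncard_eq_three]
  refine ⟨orbit CantorFan vF, orbit CantorFan eF, orbit CantorFan mF,
    orbit_vF_ne_eF, orbit_vF_ne_mF, orbit_eF_ne_mF, ?_⟩
  ext A
  constructor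
  · rintro ⟨x, rfl⟩
    rcases orbit_classify x with h | h | h
    · exact Or.inl h
    · exact Or.inr (Or.inl h)
    · exact Or.inr (Or.inr h)
  · rintro (h | h | h)
    · exact ⟨vF, h⟩
    · exact ⟨eF, h⟩
    · exact ⟨mF, h⟩



/-- The Cantor fan `F_C` is `1/3`-homogeneous. -/
theorem cantorFan_oneThirdHomogeneous : OneOverHomogeneous CantorFan 3 :=
  cantorFan_oneThirdHomogeneous'

end FansHomogeneity
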